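/- arXiv:1206.0265 — 10 statements merged into one kernel-verified Lean document; each statement's English description precedes it below -/
import Mathlib

section
/- Let N be a positive integer, let μ denote Lebesgue measure on ℝ^N, let C ⊆ ℝ^N be a convex set with nonempty interior, and let U ⊆ ℝ^N be a density open set. If U ∩ C ≠ ∅, then μ(U ∩ C) > 0. -/
open MeasureTheory Metric Filter

/-- A set `U ⊆ ℝ^N` is density open if it is Lebesgue measurable and every point of `U`
is a Lebesgue density point of `U`. -/
def DensityOpen {N : ℕ} (U : Set (EuclideanSpace ℝ (Fin N))) : Prop :=
  NullMeasurableSet U volume ∧ ∀ x ∈ U,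
    Tendsto (fun r : ℝ => volume (U ∩ ball x r) / volume (ball x r))
      (nhdsWithin 0 (Set.Ioi 0)) (nhds 1)

theorem stmt_0 {N : ℕ} (hN : 0 < N) (C U : Set (EuclideanSpace ℝ (Fin N)))
    (hC : Convex ℝ C) (hCint : (interior C).Nonempty)
    (hU : DensityOpen U) (hUC : (U ∩ C).Nonempty) :
    0 < volume (U ∩ C) := by
  obtain ⟨x, hxU, hxC⟩ := hUC
  obtain ⟨y, hy⟩ := hCint
  obtain ⟨ε, εpos, hball⟩ := Metric.isOpen_iff.1 isOpen_interior y hy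
  have hballC : ball y ε ⊆ C := hball.trans interior_subset
  set D : ℝ := dist x y + ε with hD
  have Dpos : 0 < D := by positivity
  have hεD : ε ≤ D := by
    have := dist_nonneg (x := x) (y := y); dsimp [D]; linarith
  set c : ℝ := (ε / D) ^ N with hc
  have cpos : 0 < c := by positivity
  have cle : c ≤ 1 := by
    apply pow_le_one₀ (by positivity)
    rw [div_le_one Dpos]; exact hεD
  have hdens := hU.2 x hxU
  have h1 : (1 : ENNReal) - ENNReal.ofReal (c / 2) < 1 :=
    ENNReal.sub_lt_self ENNReal.one_ne_top one_ne_zero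
      (by simp [ENNReal.ofReal_pos]; linarith)
  have hev : ∀ᶠ r in nhdsWithin (0 : ℝ) (Set.Ioi 0),
      1 - ENNReal.ofReal (c / 2) < volume (U ∩ ball x r) / volume (ball x r) :=
    hdens.eventually (eventually_gt_nhds h1)
  have h2 : ∀ᶠ r in nhdsWithin (0 : ℝ) (Set.Ioi 0), r < D :=
    eventually_nhdsWithin_of_eventually_nhds (eventually_lt_nhds Dpos)
  have h3 : ∀ᶠ r in nhdsWithin (0 : ℝ) (Set.Ioi 0), (0 : ℝ) < r :=
    eventually_mem_nhdsWithin
  obtain ⟨r, hr1, hrD, hrpos⟩ := (hev.and (h2.and h3)).exists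
  set t : ℝ := r / D with ht
  have tpos : 0 < t := by positivity
  have htD : t * D = r := div_mul_cancel₀ r Dpos.ne'
  have tle : t ≤ 1 := by rw [ht, div_le_one Dpos]; exact hrD.le
  set z : EuclideanSpace ℝ (Fin N) := x + t • (y - x) with hz
  -- the homothetic ball is inside C ∩ ball x r
  have hsub : ball z (t * ε) ⊆ C ∩ ball x r := by
    intro w hw
    rw [mem_ball, dist_eq_norm] at hw
    constructor
    · have hw' : x + t⁻¹ • (w - x) ∈ ball y ε := by
        rw [mem_ball, dist_eq_norm]
        have heq : (x + t⁻¹ • (w - x)) - y = t⁻¹ • (w - z) := by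
          rw [hz, smul_sub, smul_sub, smul_add, smul_smul,
            inv_mul_cancel₀ tpos.ne', one_smul]
          module
        rw [heq, norm_smul, norm_inv, Real.norm_eq_abs, abs_of_pos tpos]
        calc t⁻¹ * ‖w - z‖ < t⁻¹ * (t * ε) := by
              apply mul_lt_mul_of_pos_left hw (by positivity)
          _ = ε := by field_simp
      have hmem := hC hxC (hballC hw') (a := 1 - t) (b := t)
        (by linarith) tpos.le (by ring)
      have heq2 : (1 - t) • x + t • (x + t⁻¹ • (w - x)) = w := by
        rw [smul_add, smul_smul, mul_inv_cancel₀ tpos.ne', one_smul]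
        module
      rwa [heq2] at hmem
    · rw [mem_ball]
      calc dist w x ≤ dist w z + dist z x := dist_triangle w z x
        _ < t * ε + dist z x := by
            apply add_lt_add_left; rw [dist_eq_norm]; exact hw
        _ = t * ε + t * dist x y := by
            rw [hz, dist_eq_norm]
            simp only [add_sub_cancel_left, norm_smul, Real.norm_eq_abs,
              abs_of_pos tpos, dist_eq_norm]
            rw [norm_sub_rev]
        _ = t * D := by rw [hD]; ring
        _ = r := htD
  -- volume lower bound for C ∩ ball x r
  have hfr : Module.finrank ℝ (EuclideanSpace ℝ (Fin N)) = N := finrank_euclideanSpace_fin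
  have hCB : ENNReal.ofReal c * volume (ball x r) ≤ volume (C ∩ ball x r) := by
    have hb1 : volume (ball z (t * ε))
        = ENNReal.ofReal ((t * ε) ^ N) * volume (ball (0 : EuclideanSpace ℝ (Fin N)) 1) := by
      rw [Measure.addHaar_ball_of_pos volume z (by positivity), hfr]
    have hb2 : volume (ball x r)
        = ENNReal.ofReal (r ^ N) * volume (ball (0 : EuclideanSpace ℝ (Fin N)) 1) := by
      rw [Measure.addHaar_ball_of_pos volume x hrpos, hfr]
    calc ENNReal.ofReal c * volume (ball x r)
        = ENNReal.ofReal (c * r ^ N) * volume (ball (0 : EuclideanSpace ℝ (Fin N)) 1) := by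
          rw [hb2, ← mul_assoc, ← ENNReal.ofReal_mul cpos.le]
      _ = volume (ball z (t * ε)) := by
          rw [hb1]
          congr 2
          rw [hc, ht, ← mul_pow]
          ring
      _ ≤ volume (C ∩ ball x r) := measure_mono hsub
  set B := ball x r with hB
  have μBpos : 0 < volume B := measure_ball_pos volume x hrpos
  have μBfin : volume B ≠ ⊤ := measure_ball_lt_top.ne
  have key : volume (B ∩ U) + volume (B \ U) = volume B :=
    measure_inter_add_diff₀ B hU.1
  -- from density estimate
  have hlt : (1 - ENNReal.ofReal (c / 2)) * volume B < volume (U ∩ B) := by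
    rw [← ENNReal.lt_div_iff_mul_lt (Or.inl μBpos.ne') (Or.inl μBfin)]
    exact hr1
  have hone : ENNReal.ofReal (1 - c / 2) = 1 - ENNReal.ofReal (c / 2) := by
    rw [ENNReal.ofReal_sub _ (by linarith), ENNReal.ofReal_one]
  have hsum : ENNReal.ofReal (1 - c / 2) * volume B + ENNReal.ofReal (c / 2) * volume B
      = volume B := by
    rw [← add_mul, ← ENNReal.ofReal_add (by linarith) (by linarith)]
    norm_num
  have hBU : volume (B \ U) < ENNReal.ofReal (c / 2) * volume B := by
    have hdfin : volume (B \ U) ≠ ⊤ :=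
      ((measure_mono Set.diff_subset).trans_lt measure_ball_lt_top).ne
    have h4 : ENNReal.ofReal (1 - c / 2) * volume B + volume (B \ U)
        < ENNReal.ofReal (1 - c / 2) * volume B + ENNReal.ofReal (c / 2) * volume B := by
      conv_rhs => rw [hsum, ← key]
      have hlt' : ENNReal.ofReal (1 - c / 2) * volume B < volume (B ∩ U) := by
        rw [hone, Set.inter_comm]; exact hlt
      exact ENNReal.add_lt_add_of_lt_of_le hdfin hlt' le_rfl
    exact lt_of_add_lt_add_left h4
  have hchain : volume (B \ U) < volume (U ∩ (C ∩ B)) + volume (B \ U) := by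
    calc volume (B \ U) < ENNReal.ofReal (c / 2) * volume B := hBU
      _ < ENNReal.ofReal c * volume B := by
          rw [mul_comm _ (volume B), mul_comm _ (volume B)]; apply ENNReal.mul_lt_mul_right μBpos.ne' μBfin
          exact ENNReal.ofReal_lt_ofReal_iff cpos |>.2 (by linarith)
      _ ≤ volume (C ∩ B) := hCB
      _ ≤ volume (U ∩ (C ∩ B) ∪ (B \ U)) := by
          apply measure_mono
          intro w ⟨hwC, hwB⟩
          by_cases hwU : w ∈ U
          · exact Or.inl ⟨hwU, hwC, hwB⟩
          · exact Or.inr ⟨hwB, hwU⟩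
      _ ≤ volume (U ∩ (C ∩ B)) + volume (B \ U) := measure_union_le _ _
  have hpos : 0 < volume (U ∩ (C ∩ B)) := by
    by_contra h
    push_neg at h
    rw [le_zero_iff] at h
    rw [h, zero_add] at hchain
    exact lt_irrefl _ hchain
  exact hpos.trans_le (measure_mono fun w ⟨h1, h2, _⟩ => ⟨h1, h2⟩)
end

section
/- Let N be a positive integer, let μ denote Lebesgue measure on ℝ^N, let C ⊆ ℝ^N be a convex set, and let U ⊆ ℝ^N be a density open set. If U ∩ (ℝ^N \ C) ≠ ∅, then μ(U ∩ (ℝ^N \ C)) > 0. -/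
open MeasureTheory Metric Filter

open scoped ENNReal

-- interior of closure of a convex set is contained in the set (finite dimension)
lemma aux_interior_closure_subset {E : Type*} [NormedAddCommGroup E] [NormedSpace ℝ E]
    [FiniteDimensional ℝ E] {s : Set E} (hs : Convex ℝ s) :
    interior (closure s) ⊆ s := by
  intro x hx
  have hspan : affineSpan ℝ (closure s) = ⊤ :=
    (hs.closure.interior_nonempty_iff_affineSpan_eq_top).1 ⟨x, hx⟩
  have hspan' : affineSpan ℝ s = ⊤ := by
    have h1 : closure s ⊆ (affineSpan ℝ s : Set E) :=
      closure_minimal (subset_affineSpan ℝ s) (affineSpan ℝ s).closed_of_finiteDimensional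
    have h2 : affineSpan ℝ (closure s) ≤ affineSpan ℝ s := affineSpan_le.2 h1
    exact top_le_iff.1 (hspan ▸ h2)
  obtain ⟨y, hy⟩ := (hs.interior_nonempty_iff_affineSpan_eq_top).2 hspan'
  obtain ⟨ε, hε, hball⟩ := Metric.isOpen_iff.1 isOpen_interior x hx
  set t : ℝ := ε / (2 * (‖x - y‖ + 1)) with ht_def
  have ht : 0 < t := by positivity
  have hw : x + t • (x - y) ∈ closure s := by
    refine interior_subset (hball ?_)
    rw [mem_ball_iff_norm]
    have : x + t • (x - y) - x = t • (x - y) := by abel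
    rw [this, norm_smul, Real.norm_eq_abs, abs_of_pos ht]
    have h1 : ‖x - y‖ < ‖x - y‖ + 1 := by linarith
    calc t * ‖x - y‖ ≤ t * (‖x - y‖ + 1) := by nlinarith [norm_nonneg (x - y)]
      _ = ε / 2 := by field_simp [ht_def]; rw [ht_def]; field_simp
      _ < ε := by linarith
  have h1t : (0:ℝ) < 1 + t := by linarith
  refine interior_subset (hs.openSegment_closure_interior_subset_interior hw hy ?_)
  refine ⟨1 / (1 + t), t / (1 + t), by positivity, by positivity, by field_simp, ?_⟩
  match_scalars <;> field_simp <;> ring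

lemma aux_half_ball {N : ℕ} (f : EuclideanSpace ℝ (Fin N) →L[ℝ] ℝ) (hf : f ≠ 0)
    (x : EuclideanSpace ℝ (Fin N)) (r : ℝ) :
    volume ({y | f y ≤ f x} ∩ ball x r) = volume (ball x r) / 2 := by
  set B := ball x r
  set A1 : Set (EuclideanSpace ℝ (Fin N)) := {y | f y ≤ f x} ∩ B with hA1
  set A2 : Set (EuclideanSpace ℝ (Fin N)) := {y | f x ≤ f y} ∩ B with hA2
  have hA1m : MeasurableSet A1 :=
    ((isClosed_le (map_continuous f) continuous_const).measurableSet).inter measurableSet_ball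
  have hA2m : MeasurableSet A2 :=
    ((isClosed_le continuous_const (map_continuous f)).measurableSet).inter measurableSet_ball
  -- the hyperplane is null
  have hker : (LinearMap.ker (f : EuclideanSpace ℝ (Fin N) →ₗ[ℝ] ℝ)) ≠ ⊤ := by
    intro h
    exact hf (ContinuousLinearMap.coe_injective (by simpa using LinearMap.ker_eq_top.1 h))
  have hplane : volume {y : EuclideanSpace ℝ (Fin N) | f y = f x} = 0 := by
    have hset : {y : EuclideanSpace ℝ (Fin N) | f y = f x}
        = (fun y => y + (-x)) ⁻¹' (LinearMap.ker (f : EuclideanSpace ℝ (Fin N) →ₗ[ℝ] ℝ) : Set _) := by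
      ext y
      simp only [Set.mem_setOf_eq, Set.mem_preimage, SetLike.mem_coe, LinearMap.mem_ker,
        ContinuousLinearMap.coe_coe, map_add, map_neg]
      constructor <;> intro h <;> linarith
    rw [hset]
    rw [(measurePreserving_add_right volume (-x)).measure_preimage
      (NullMeasurableSet.of_null (Measure.addHaar_submodule volume _ hker))]
    exact Measure.addHaar_submodule volume _ hker
  -- reflection sends A1 to A2
  have hrefl : volume A1 = volume A2 := by
    have hmp : MeasurePreserving (fun y : EuclideanSpace ℝ (Fin N) => (x + x) - y)
        volume volume := Measure.measurePreserving_sub_left volume (x + x)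
    have hpre : (fun y : EuclideanSpace ℝ (Fin N) => (x + x) - y) ⁻¹' A1 = A2 := by
      ext y
      simp only [hA1, hA2, Set.mem_preimage, Set.mem_inter_iff, Set.mem_setOf_eq, map_sub,
        map_add, B, mem_ball]
      constructor
      · rintro ⟨h1, h2⟩
        refine ⟨by linarith, ?_⟩
        rwa [show dist (x + x - y) x = dist y x by
          rw [dist_eq_norm, dist_eq_norm, show x + x - y - x = x - y by abel, norm_sub_rev]] at h2
      · rintro ⟨h1, h2⟩
        refine ⟨by linarith, ?_⟩
        rwa [show dist (x + x - y) x = dist y x by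
          rw [dist_eq_norm, dist_eq_norm, show x + x - y - x = x - y by abel, norm_sub_rev]]
    rw [← hpre]
    exact (hmp.measure_preimage hA1m.nullMeasurableSet).symm
  -- union and intersection
  have hunion : A1 ∪ A2 = B := by
    ext y
    simp only [hA1, hA2, Set.mem_union, Set.mem_inter_iff, Set.mem_setOf_eq]
    constructor
    · rintro (⟨_, h⟩ | ⟨_, h⟩) <;> exact h
    · intro h
      rcases le_total (f y) (f x) with h' | h'
      · exact Or.inl ⟨h', h⟩
      · exact Or.inr ⟨h', h⟩
  have hinter : volume (A1 ∩ A2) = 0 := by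
    refine measure_mono_null ?_ hplane
    rintro y ⟨⟨h1, _⟩, ⟨h2, _⟩⟩
    exact le_antisymm h1 h2
  have hsum : volume B + 0 = volume A1 + volume A2 := by
    rw [← hunion, ← hinter]
    exact measure_union_add_inter A1 hA2m
  rw [hrefl] at hsum
  have h2 : volume B = 2 * volume A2 := by rw [two_mul]; simpa using hsum
  rw [hrefl, ENNReal.eq_div_iff two_ne_zero (by norm_num)]
  exact h2.symm

theorem stmt_1 {N : ℕ} (hN : 0 < N) (C U : Set (EuclideanSpace ℝ (Fin N)))
    (hC : Convex ℝ C) (hU : DensityOpen U) (hUC : (U ∩ Cᶜ).Nonempty) :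
    0 < volume (U ∩ Cᶜ) := by
  by_contra h
  have hzero : volume (U ∩ Cᶜ) = 0 := le_zero_iff.1 (not_lt.1 h)
  obtain ⟨x, hxU, hxC⟩ := hUC
  obtain ⟨hUm, hdens⟩ := hU
  have hfront : volume (frontier (closure C)) = 0 := (hC.closure).addHaar_frontier volume
  have hxint : x ∉ interior (closure C) := fun hx' => hxC (aux_interior_closure_subset hC hx')
  -- key : the density ratio bound
  have key : ∀ r : ℝ, 0 < r → volume (U ∩ ball x r) ≤ volume (ball x r) / 2 := by
    rcases Set.eq_empty_or_nonempty (interior (closure C)) with hemp | ⟨z, hz⟩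
    · -- closure C is null
      have hCnull : volume (closure C) = 0 := by
        rw [← hfront, frontier, hemp, Set.diff_empty, closure_closure]
      intro r _
      have hsub : U ∩ ball x r ⊆ (U ∩ Cᶜ) ∪ closure C := by
        rintro y ⟨hyU, _⟩
        by_cases hyC : y ∈ C
        · exact Or.inr (subset_closure hyC)
        · exact Or.inl ⟨hyU, hyC⟩
      calc volume (U ∩ ball x r) ≤ volume ((U ∩ Cᶜ) ∪ closure C) := measure_mono hsub
        _ ≤ volume (U ∩ Cᶜ) + volume (closure C) := measure_union_le _ _
        _ = 0 := by rw [hzero, hCnull, add_zero]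
        _ ≤ _ := zero_le
    · -- separating functional
      obtain ⟨f, hfsep⟩ := geometric_hahn_banach_open_point (hC.closure.interior) isOpen_interior
        hxint
      have hf : f ≠ 0 := by
        intro h0
        have := hfsep z hz
        rw [h0] at this
        simp at this
      intro r hr
      have hsub : U ∩ ball x r ⊆ (U ∩ Cᶜ) ∪ (({y | f y ≤ f x} ∩ ball x r) ∪
          frontier (closure C)) := by
        rintro y ⟨hyU, hyB⟩
        by_cases hyC : y ∈ C
        · by_cases hyi : y ∈ interior (closure C)
          · exact Or.inr (Or.inl ⟨(hfsep y hyi).le, hyB⟩)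
          · exact Or.inr (Or.inr ⟨by rw [closure_closure]; exact subset_closure hyC, hyi⟩)
        · exact Or.inl ⟨hyU, hyC⟩
      calc volume (U ∩ ball x r) ≤ volume (U ∩ Cᶜ) + (volume ({y | f y ≤ f x} ∩ ball x r)
            + volume (frontier (closure C))) :=
          le_trans (measure_mono hsub) ((measure_union_le _ _).trans
            (add_le_add_right (measure_union_le _ _) _))
        _ = volume (ball x r) / 2 := by
            rw [hzero, hfront, add_zero, zero_add, aux_half_ball f hf x r]
  -- contradiction with density 1
  have hlim := hdens x hxU
  have hev : ∀ᶠ r in nhdsWithin (0:ℝ) (Set.Ioi 0),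
      volume (U ∩ ball x r) / volume (ball x r) ≤ 1 / 2 := by
    filter_upwards [self_mem_nhdsWithin] with r hr
    have hb0 : volume (ball x r) ≠ 0 := (measure_ball_pos volume x hr).ne'
    have hbt : volume (ball x r) ≠ ∞ := measure_ball_lt_top.ne
    rw [ENNReal.div_le_iff hb0 hbt]
    calc volume (U ∩ ball x r) ≤ volume (ball x r) / 2 := key r hr
      _ = 1 / 2 * volume (ball x r) := by
          rw [ENNReal.div_eq_inv_mul, one_div]
  have h1 : (1 : ℝ≥0∞) ≤ 1 / 2 := le_of_tendsto hlim hev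
  have h2 : (1 : ℝ≥0∞) / 2 < 1 := ENNReal.half_lt_self one_ne_zero ENNReal.one_ne_top
  exact absurd (h1.trans_lt h2) (lt_irrefl _)
end

section
/- Let f : ℝ^N → ℝ be Lebesgue measurable. The following two statements are equivalent: (i) for every density open set U ⊆ ℝ^N, the pointwise supremum of f over U equals the essential supremum of f over U; (ii) for every x₀ ∈ ℝ^N, every density open set U ⊆ ℝ^N containing x₀, and every ε > 0, the set {x ∈ U : f(x) ≥ f(x₀) − ε} has positive Lebesgue measure. -/
open MeasureTheory Metric Filter

theorem stmt_2 {N : ℕ} (f : EuclideanSpace ℝ (Fin N) → ℝ)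
    (hf : NullMeasurable f volume) :
    (∀ U : Set (EuclideanSpace ℝ (Fin N)), DensityOpen U →
        (⨆ x ∈ U, (f x : EReal)) = essSup (fun x => (f x : EReal)) (volume.restrict U)) ↔
      (∀ x₀ : EuclideanSpace ℝ (Fin N), ∀ U : Set (EuclideanSpace ℝ (Fin N)),
        DensityOpen U → x₀ ∈ U → ∀ ε : ℝ, 0 < ε →
          0 < volume {x ∈ U | f x₀ - ε ≤ f x}) := by
  constructor
  · intro h x₀ U hU hx₀ ε hε
    by_contra hpos
    have h0 : volume {x ∈ U | f x₀ - ε ≤ f x} = 0 := by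
      simpa using le_of_not_gt hpos
    have hnull : volume.restrict U {x ∈ U | f x₀ - ε ≤ f x} = 0 :=
      le_antisymm ((Measure.restrict_apply_le U _).trans h0.le) zero_le
    have hae : ∀ᵐ x ∂volume.restrict U, (f x : EReal) ≤ ((f x₀ - ε : ℝ) : EReal) := by
      filter_upwards [ae_restrict_mem₀ hU.1,
        measure_eq_zero_iff_ae_notMem.mp hnull] with x hxU hx
      by_contra hlt
      exact hx ⟨hxU, by exact_mod_cast (not_le.mp hlt).le⟩
    have hle : essSup (fun x => (f x : EReal)) (volume.restrict U)
        ≤ ((f x₀ - ε : ℝ) : EReal) := essSup_le_of_ae_le _ hae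
    have hsup : (f x₀ : EReal) ≤ ⨆ x ∈ U, (f x : EReal) :=
      le_biSup (fun x => (f x : EReal)) hx₀
    rw [h U hU] at hsup
    have : (f x₀ : EReal) ≤ ((f x₀ - ε : ℝ) : EReal) := hsup.trans hle
    rw [EReal.coe_le_coe_iff] at this
    linarith
  · intro h U hU
    apply le_antisymm
    · -- sup ≤ essSup
      refine iSup₂_le fun x₀ hx₀ => ?_
      by_contra hlt
      obtain ⟨c, hc1, hc2⟩ := exists_between (not_le.mp hlt)
      have hcbot : c ≠ ⊥ := fun hb => by simp [hb] at hc1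
      have hctop : c ≠ ⊤ := fun ht => by rw [ht] at hc2; exact (not_top_lt hc2)
      lift c to ℝ using ⟨hctop, hcbot⟩ with b
      have hεpos : 0 < f x₀ - b := by
        rw [EReal.coe_lt_coe_iff] at hc2; linarith
      have hposvol := h x₀ U hU hx₀ (f x₀ - b) hεpos
      have hb : f x₀ - (f x₀ - b) = b := by ring
      rw [hb] at hposvol
      have haelt : ∀ᵐ x ∂volume.restrict U, (f x : EReal) < (b : EReal) :=
        ae_lt_of_essSup_lt hc1
      have hrnull : volume.restrict U {x ∈ U | b ≤ f x} = 0 := by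
        have h1 : volume.restrict U {x | ¬ ((f x : EReal) < (b : EReal))} = 0 :=
          ae_iff.mp haelt
        exact measure_mono_null
          (fun x hx => not_lt.mpr (EReal.coe_le_coe_iff.mpr hx.2)) h1
      set V := toMeasurable volume U with hV
      have hUV : U =ᵐ[volume] V := (NullMeasurableSet.toMeasurable_ae_eq hU.1).symm
      have hrest : volume.restrict U = volume.restrict V :=
        Measure.restrict_congr_set hUV
      have hsubV : {x ∈ U | b ≤ f x} ⊆ V := fun x hx =>
        subset_toMeasurable volume U hx.1
      have hvol0 : volume {x ∈ U | b ≤ f x} = 0 := by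
        have : volume.restrict V {x ∈ U | b ≤ f x} = 0 := by rw [← hrest]; exact hrnull
        rwa [Measure.restrict_apply' (measurableSet_toMeasurable volume U),
          Set.inter_eq_self_of_subset_left hsubV] at this
      rw [hvol0] at hposvol
      exact lt_irrefl _ hposvol
    · -- essSup ≤ sup
      refine essSup_le_of_ae_le _ ?_
      filter_upwards [ae_restrict_mem₀ hU.1] with x hx
      exact le_biSup (fun x => (f x : EReal)) hx
end

section
/- Let f : ℝ^N → ℝ be Lebesgue measurable. The following two statements are equivalent: (i) for every density open set U ⊆ ℝ^N, the pointwise infimum of f over U equals the essential infimum of f over U; (ii) for every x₀ ∈ ℝ^N, every density open set U ⊆ ℝ^N containing x₀, and every ε > 0, the set {x ∈ U : f(x) < f(x₀) + ε} has positive Lebesgue measure. -/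
open MeasureTheory Metric Filter

theorem stmt_3 {N : ℕ} (f : EuclideanSpace ℝ (Fin N) → ℝ)
    (hf : NullMeasurable f volume) :
    (∀ U : Set (EuclideanSpace ℝ (Fin N)), DensityOpen U →
        (⨅ x ∈ U, (f x : EReal)) = essInf (fun x => (f x : EReal)) (volume.restrict U)) ↔
      (∀ x₀ : EuclideanSpace ℝ (Fin N), ∀ U : Set (EuclideanSpace ℝ (Fin N)),
        DensityOpen U → x₀ ∈ U → ∀ ε : ℝ, 0 < ε →
          0 < volume {x ∈ U | f x < f x₀ + ε}) := by
  constructor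
  · intro h x₀ U hU hx₀ ε hε
    by_contra hpos
    push_neg at hpos
    have hzero : volume {x ∈ U | f x < f x₀ + ε} = 0 := le_antisymm hpos bot_le
    -- a.e. on U, f x₀ + ε ≤ f x
    have hae : ∀ᵐ x ∂(volume.restrict U), ((f x₀ + ε : ℝ) : EReal) ≤ (f x : EReal) := by
      rw [ae_iff]
      have : {x | ¬ ((f x₀ + ε : ℝ) : EReal) ≤ (f x : EReal)} ∩ U ⊆
          {x ∈ U | f x < f x₀ + ε} := by
        intro x hx
        refine ⟨hx.2, ?_⟩
        have h3 : ¬ ((f x₀ + ε : ℝ) : EReal) ≤ (f x : EReal) := hx.1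
        rw [not_le, EReal.coe_lt_coe_iff] at h3
        exact h3
      refine le_antisymm ?_ bot_le
      calc volume.restrict U {x | ¬ ((f x₀ + ε : ℝ) : EReal) ≤ (f x : EReal)}
          = volume ({x | ¬ ((f x₀ + ε : ℝ) : EReal) ≤ (f x : EReal)} ∩ U) :=
            Measure.restrict_apply₀' hU.1
        _ ≤ volume {x ∈ U | f x < f x₀ + ε} := measure_mono this
        _ = 0 := hzero
    have h1 : ((f x₀ + ε : ℝ) : EReal) ≤ essInf (fun x => (f x : EReal)) (volume.restrict U) :=
      le_essInf_of_ae_le _ hae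
    have h2 : essInf (fun x => (f x : EReal)) (volume.restrict U) ≤ (f x₀ : EReal) := by
      rw [← h U hU]
      exact iInf₂_le x₀ hx₀
    have := h1.trans h2
    rw [EReal.coe_le_coe_iff] at this
    linarith
  · intro h U hU
    refine le_antisymm ?_ ?_
    · -- inf ≤ essInf
      refine le_essInf_of_ae_le _ ?_
      filter_upwards [ae_restrict_mem₀ hU.1] with x hx
      exact iInf₂_le x hx
    · -- essInf ≤ inf
      refine le_iInf₂ fun x₀ hx₀ => ?_
      rw [← EReal.le_of_forall_lt_iff_le]
      intro z hz
      rw [EReal.coe_lt_coe_iff] at hz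
      have hpos := h x₀ U hU hx₀ (z - f x₀) (by linarith)
      have hpos' : 0 < volume {x ∈ U | f x < z} := by
        simpa [add_sub_cancel] using hpos
      rw [essInf_eq_sSup]
      refine sSup_le fun a ha => ?_
      by_contra hle
      push_neg at hle
      have hsub : {x ∈ U | f x < z} ⊆ {x | (f x : EReal) < a} ∩ U := by
        intro x hx
        refine ⟨?_, hx.1⟩
        have : (f x : EReal) < (z : EReal) := EReal.coe_lt_coe_iff.2 hx.2
        exact this.trans hle
      have : volume {x ∈ U | f x < z} = 0 := by
        refine le_antisymm ?_ bot_le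
        calc volume {x ∈ U | f x < z} ≤ volume ({x | (f x : EReal) < a} ∩ U) :=
              measure_mono hsub
          _ = volume.restrict U {x | (f x : EReal) < a} :=
              (Measure.restrict_apply₀' hU.1).symm
          _ = 0 := ha
      exact absurd this hpos'.ne'
end

section
/- Let f : ℝ^N → [−∞, ∞] be a quasiconvex function. Then the pointwise infimum of f over U equals the essential infimum of f over U for every density open set U ⊆ ℝ^N if and only if the pointwise infimum of f over ℝ^N equals the essential infimum of f over ℝ^N. -/
open MeasureTheory Metric Filter

/-- A convex set containing `x₀` and a ball `ball y δ` contains, inside each small ball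
`ball x₀ r`, a ball of radius comparable to `r`. -/
lemma convex_density_lower_bound {N : ℕ} {S : Set (EuclideanSpace ℝ (Fin N))}
    (hS : Convex ℝ S) {x₀ y : EuclideanSpace ℝ (Fin N)} (hx₀ : x₀ ∈ S) {δ : ℝ}
    (hδ : 0 < δ) (hball : ball y δ ⊆ S) {r : ℝ} (hr : 0 < r) (hrR : r ≤ δ + dist y x₀) :
    ENNReal.ofReal ((δ / (δ + dist y x₀)) ^ Module.finrank ℝ (EuclideanSpace ℝ (Fin N)))
      * volume (ball x₀ r) ≤ volume (S ∩ ball x₀ r) := by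
  set d : ℝ := dist y x₀ with hd
  have hd0 : 0 ≤ d := dist_nonneg
  have hR : 0 < δ + d := by linarith
  set t : ℝ := r / (δ + d) with ht
  have ht0 : 0 < t := div_pos hr hR
  have ht1 : t ≤ 1 := (div_le_one hR).2 hrR
  set z : EuclideanSpace ℝ (Fin N) := x₀ + t • (y - x₀) with hz
  have hsub : ball z (t * δ) ⊆ S ∩ ball x₀ r := by
    intro w hw
    rw [mem_ball] at hw
    set v : EuclideanSpace ℝ (Fin N) := x₀ + t⁻¹ • (w - x₀) with hv
    have hvy : v ∈ ball y δ := by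
      rw [mem_ball]
      have hkey : v - y = t⁻¹ • (w - z) := by
        rw [hv, hz]
        match_scalars <;> (try field_simp) <;> (try ring)
      have hnorm : dist v y = t⁻¹ * dist w z := by
        rw [dist_eq_norm, dist_eq_norm, hkey, norm_smul, Real.norm_eq_abs,
          abs_of_pos (inv_pos.2 ht0)]
      rw [hnorm]
      calc t⁻¹ * dist w z < t⁻¹ * (t * δ) := by
            exact mul_lt_mul_of_pos_left hw (inv_pos.2 ht0)
        _ = δ := by field_simp
    constructor
    · have hwv : w = (1 - t) • x₀ + t • v := by
        rw [hv]
        match_scalars <;> (try field_simp) <;> ring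
      rw [hwv]
      exact hS hx₀ (hball hvy) (by linarith) ht0.le (by ring)
    · rw [mem_ball]
      have hzx : dist z x₀ = t * d := by
        rw [hz, dist_eq_norm]
        simp only [add_sub_cancel_left, norm_smul, Real.norm_eq_abs, abs_of_pos ht0]
        rw [hd, dist_comm, dist_eq_norm, norm_sub_rev]
      calc dist w x₀ ≤ dist w z + dist z x₀ := dist_triangle w z x₀
        _ < t * δ + t * d := by exact add_lt_add_of_lt_of_le hw hzx.le
        _ = r := by rw [ht]; field_simp
  calc ENNReal.ofReal ((δ / (δ + d)) ^ Module.finrank ℝ (EuclideanSpace ℝ (Fin N)))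
        * volume (ball x₀ r)
      = ENNReal.ofReal ((δ / (δ + d)) ^ Module.finrank ℝ (EuclideanSpace ℝ (Fin N))) *
          (ENNReal.ofReal (r ^ Module.finrank ℝ (EuclideanSpace ℝ (Fin N))) *
            volume (ball (0 : EuclideanSpace ℝ (Fin N)) 1)) := by
        rw [Measure.addHaar_ball_of_pos _ _ hr]
    _ = ENNReal.ofReal ((t * δ) ^ Module.finrank ℝ (EuclideanSpace ℝ (Fin N))) *
          volume (ball (0 : EuclideanSpace ℝ (Fin N)) 1) := by
        rw [← mul_assoc, ← ENNReal.ofReal_mul (by positivity), ← mul_pow]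
        congr 3
        rw [ht]; field_simp
    _ = volume (ball z (t * δ)) := (Measure.addHaar_ball_of_pos _ _ (by positivity)).symm
    _ ≤ volume (S ∩ ball x₀ r) := measure_mono hsub

theorem stmt_5 {N : ℕ} (f : EuclideanSpace ℝ (Fin N) → EReal)
    (hf : ∀ α : ℝ, Convex ℝ {x | f x < (α : EReal)}) :
    (∀ U : Set (EuclideanSpace ℝ (Fin N)), DensityOpen U →
        (⨅ x ∈ U, f x) = essInf f (volume.restrict U)) ↔
      (⨅ x, f x) = essInf f volume := by
  constructor
  · intro h
    have hU : DensityOpen (Set.univ : Set (EuclideanSpace ℝ (Fin N))) := by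
      refine ⟨MeasurableSet.univ.nullMeasurableSet, fun x _ => ?_⟩
      have : ∀ᶠ r : ℝ in nhdsWithin 0 (Set.Ioi 0),
          volume (Set.univ ∩ ball x r) / volume (ball x r) = 1 := by
        filter_upwards [self_mem_nhdsWithin] with r hr
        rw [Set.univ_inter]
        exact ENNReal.div_self (measure_ball_pos _ _ hr).ne' measure_ball_lt_top.ne
      exact Tendsto.congr' (this.mono fun r hr => hr.symm) tendsto_const_nhds
    have := h Set.univ hU
    simpa [Measure.restrict_univ] using this
  · intro hglobal U hU
    refine le_antisymm ?_ ?_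
    · refine le_essInf_of_ae_le _ ?_
      filter_upwards [ae_restrict_mem₀ hU.1] with x hx
      exact iInf₂_le x hx
    · rw [le_iInf₂_iff]
      intro x₀ hx₀
      by_contra hlt
      push_neg at hlt
      obtain ⟨α, hα1, hα2⟩ := EReal.exists_between_coe_real hlt
      set S : Set (EuclideanSpace ℝ (Fin N)) := {x | f x < (α : EReal)} with hSdef
      have hSconv : Convex ℝ S := hf α
      have hx₀S : x₀ ∈ S := hα1
      -- S ∩ U is null
      have hae : ∀ᵐ x ∂volume.restrict U, (α : EReal) < f x := ae_lt_of_lt_essInf hα2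
      have hnull : volume (S ∩ U) = 0 := by
        rw [← Measure.restrict_apply₀' hU.1]
        refine measure_mono_null (fun x hx => ?_) (ae_iff.1 hae)
        exact asymm (hx : f x < (α : EReal))
      by_cases hS : volume S = 0
      · -- then f ≥ α a.e. globally, contradicting global inf = essInf
        have h1 : (α : EReal) ≤ essInf f volume := by
          refine le_essInf_of_ae_le _ ?_
          rw [EventuallyLE, ae_iff]
          refine measure_mono_null (fun x hx => ?_) hS
          exact lt_of_not_ge hx
        rw [← hglobal] at h1
        exact absurd (h1.trans (iInf_le f x₀)) (not_le.2 hα1)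
      · -- S has positive measure, hence nonempty interior
        have hint : (interior S).Nonempty := by
          by_contra hemp
          rw [Set.not_nonempty_iff_eq_empty] at hemp
          apply hS
          have hfr : volume (frontier S) = 0 := hSconv.addHaar_frontier volume
          have : S ⊆ frontier S := by
            rw [frontier, hemp, Set.diff_empty]
            exact subset_closure
          exact measure_mono_null this hfr
        obtain ⟨y, hy⟩ := hint
        obtain ⟨δ, hδ, hball⟩ := Metric.isOpen_iff.1 isOpen_interior y hy
        replace hball : ball y δ ⊆ S := hball.trans interior_subset
        set d : ℝ := dist y x₀
        have hd0 : 0 ≤ d := dist_nonneg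
        have hR : 0 < δ + d := by linarith
        set n := Module.finrank ℝ (EuclideanSpace ℝ (Fin N))
        set c : ℝ := (δ / (δ + d)) ^ n with hc
        have hc0 : 0 < c := by positivity
        have hc1 : c ≤ 1 := by
          apply pow_le_one₀ (by positivity)
          rw [div_le_one hR]; linarith
        -- eventually the density of U exceeds 1 - c/2 and r < δ + d
        have hk : ENNReal.ofReal (1 - c / 2) < 1 := by
          rw [← ENNReal.ofReal_one]
          exact ENNReal.ofReal_lt_ofReal_iff_of_nonneg (by linarith) |>.2 (by linarith)
        have hev1 : ∀ᶠ r : ℝ in nhdsWithin 0 (Set.Ioi 0),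
            ENNReal.ofReal (1 - c / 2) < volume (U ∩ ball x₀ r) / volume (ball x₀ r) :=
          (hU.2 x₀ hx₀).eventually (eventually_gt_nhds hk)
        have hev2 : ∀ᶠ r : ℝ in nhdsWithin 0 (Set.Ioi 0), r ∈ Set.Ioo (0 : ℝ) (δ + d) :=
          Ioo_mem_nhdsGT_of_mem ⟨le_refl 0, hR⟩
        obtain ⟨r, hrden, hr0, hrR⟩ := (hev1.and hev2).exists
        set B := ball x₀ r
        have hB0 : volume B ≠ 0 := (measure_ball_pos _ _ hr0).ne'
        have hBtop : volume B ≠ ⊤ := measure_ball_lt_top.ne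
        have hUB : ENNReal.ofReal (1 - c / 2) * volume B < volume (U ∩ B) :=
          ENNReal.mul_lt_of_lt_div hrden
        have hSB : ENNReal.ofReal c * volume B ≤ volume (S ∩ B) :=
          convex_density_lower_bound hSconv hx₀S hδ hball hr0 hrR.le
        -- inclusion-exclusion
        have hIE : volume ((U ∩ B) ∪ (S ∩ B)) + volume ((U ∩ B) ∩ (S ∩ B))
            = volume (U ∩ B) + volume (S ∩ B) :=
          measure_union_add_inter₀ _ ((hSconv.nullMeasurableSet _).inter
            measurableSet_ball.nullMeasurableSet)
        have hsub2 : (U ∩ B) ∩ (S ∩ B) ⊆ S ∩ U := fun x hx => ⟨hx.2.1, hx.1.1⟩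
        have hzero : volume ((U ∩ B) ∩ (S ∩ B)) = 0 :=
          measure_mono_null hsub2 hnull
        have hle : volume (U ∩ B) + volume (S ∩ B) ≤ volume B := by
          rw [← hIE, hzero, add_zero]
          exact measure_mono (Set.union_subset Set.inter_subset_right Set.inter_subset_right)
        have hgt : volume B < volume (U ∩ B) + volume (S ∩ B) := by
          calc volume B = 1 * volume B := (one_mul _).symm
            _ < ENNReal.ofReal (1 + c / 2) * volume B := by
                refine ENNReal.mul_lt_mul_iff_left hB0 hBtop |>.2 ?_
                rw [← ENNReal.ofReal_one]
                exact ENNReal.ofReal_lt_ofReal_iff_of_nonneg (by norm_num) |>.2 (by linarith)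
            _ = (ENNReal.ofReal (1 - c / 2) + ENNReal.ofReal c) * volume B := by
                rw [← ENNReal.ofReal_add (by linarith) hc0.le]
                ring_nf
            _ = ENNReal.ofReal (1 - c / 2) * volume B + ENNReal.ofReal c * volume B := by
                rw [add_mul]
            _ < volume (U ∩ B) + volume (S ∩ B) :=
                ENNReal.add_lt_add_of_lt_of_le
                  (ENNReal.mul_ne_top ENNReal.ofReal_ne_top hBtop) hUB hSB
        exact absurd hle (not_le.2 hgt)
end

section
/- Let f : ℝ^N → [−∞, ∞] be a convex function, i.e. its epigraph {(x,t) ∈ ℝ^N × ℝ : f(x) ≤ t} is a convex subset of ℝ^N × ℝ. Then the pointwise infimum of f over U equals the essential infimum of f over U for every density open set U ⊆ ℝ^N if and only if either f = +∞ identically on ℝ^N, or the domain dom f := {x ∈ ℝ^N : f(x) < +∞} has nonempty interior. -/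
open MeasureTheory Metric Filter
open scoped ENNReal NNReal Topology

lemma exists_real_ge_of_lt_top {a : EReal} (h : a < ⊤) : ∃ t : ℝ, a ≤ (t : EReal) := by
  induction a with
  | bot => exact ⟨0, bot_le⟩
  | coe r => exact ⟨r, le_refl _⟩
  | top => exact absurd h (lt_irrefl _)

section aux

variable {N : ℕ} {f : EuclideanSpace ℝ (Fin N) → EReal}

lemma sublevel_convex
    (hf : Convex ℝ {p : EuclideanSpace ℝ (Fin N) × ℝ | f p.1 ≤ (p.2 : EReal)}) (M : ℝ) :
    Convex ℝ {y : EuclideanSpace ℝ (Fin N) | f y ≤ (M : EReal)} := by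
  intro x hx y hy a b ha hb hab
  have h := hf (x := (x, M)) (y := (y, M)) hx hy ha hb hab
  simp only [Prod.smul_mk, Prod.mk_add_mk, Set.mem_setOf_eq, smul_eq_mul] at h
  have : a * M + b * M = M := by rw [← add_mul, hab, one_mul]
  rwa [this] at h

lemma dom_convex
    (hf : Convex ℝ {p : EuclideanSpace ℝ (Fin N) × ℝ | f p.1 ≤ (p.2 : EReal)}) :
    Convex ℝ {y : EuclideanSpace ℝ (Fin N) | f y < ⊤} := by
  intro x hx y hy a b ha hb hab
  obtain ⟨s, hs⟩ := exists_real_ge_of_lt_top hx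
  obtain ⟨t, ht⟩ := exists_real_ge_of_lt_top hy
  have hx' : (x, max s t) ∈ {p : EuclideanSpace ℝ (Fin N) × ℝ | f p.1 ≤ (p.2 : EReal)} := by
    exact hs.trans (by exact_mod_cast le_max_left s t)
  have hy' : (y, max s t) ∈ {p : EuclideanSpace ℝ (Fin N) × ℝ | f p.1 ≤ (p.2 : EReal)} := by
    exact ht.trans (by exact_mod_cast le_max_right s t)
  have h := hf hx' hy' ha hb hab
  simp only [Prod.smul_mk, Prod.mk_add_mk, Set.mem_setOf_eq, smul_eq_mul] at h
  exact lt_of_le_of_lt h (EReal.coe_lt_top _)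

/-- zero measure of a convex set with empty interior -/
lemma convex_measure_zero {s : Set (EuclideanSpace ℝ (Fin N))} (hs : Convex ℝ s)
    (h : interior s = ∅) : volume s = 0 := by
  have h1 : s ⊆ frontier s := by
    rw [frontier, h, Set.diff_empty]
    exact subset_closure
  exact measure_mono_null h1 (hs.addHaar_frontier volume)

/-- a ball on which f is bounded above -/
lemma bound_ball
    (hf : Convex ℝ {p : EuclideanSpace ℝ (Fin N) × ℝ | f p.1 ≤ (p.2 : EReal)})
    (hne : (interior {x | f x < ⊤}).Nonempty) :
    ∃ (z : EuclideanSpace ℝ (Fin N)) (δ M : ℝ), 0 < δ ∧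
      ∀ y ∈ ball z δ, f y ≤ (M : EReal) := by
  obtain ⟨z₀, hz₀⟩ := hne
  obtain ⟨δ₀, hδ₀, hball⟩ := Metric.isOpen_iff.1 isOpen_interior z₀ hz₀
  set S : ℕ → Set (EuclideanSpace ℝ (Fin N)) :=
    fun n => {y | f y ≤ ((n : ℝ) : EReal)} with hS
  have hcover : ball z₀ δ₀ ⊆ ⋃ n, (S n ∩ ball z₀ δ₀) := by
    intro y hy
    have hy'' : y ∈ {x | f x < ⊤} := interior_subset (hball hy)
    have hy' : f y < ⊤ := hy''
    obtain ⟨t, ht⟩ := exists_real_ge_of_lt_top hy'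
    refine Set.mem_iUnion.2 ⟨⌈t⌉₊, ⟨?_, hy⟩⟩
    exact ht.trans (by exact_mod_cast Nat.le_ceil t)
  have hpos : ∃ n, volume (S n ∩ ball z₀ δ₀) ≠ 0 := by
    by_contra hcon
    push_neg at hcon
    have := measure_mono_null hcover (measure_iUnion_null hcon)
    exact absurd this (measure_ball_pos volume z₀ hδ₀).ne'
  obtain ⟨n, hn⟩ := hpos
  have hconv : Convex ℝ (S n ∩ ball z₀ δ₀) :=
    (sublevel_convex hf (n : ℝ)).inter (convex_ball z₀ δ₀)
  have hint : (interior (S n ∩ ball z₀ δ₀)).Nonempty := by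
    by_contra hcon
    rw [Set.not_nonempty_iff_eq_empty] at hcon
    exact hn (convex_measure_zero hconv hcon)
  obtain ⟨w, hw⟩ := hint
  obtain ⟨δ', hδ', hball'⟩ := Metric.isOpen_iff.1 isOpen_interior w hw
  exact ⟨w, δ', n, hδ', fun y hy => (interior_subset (hball' hy)).1⟩

end aux

section key

variable {N : ℕ} {f : EuclideanSpace ℝ (Fin N) → EReal}

lemma key
    (hf : Convex ℝ {p : EuclideanSpace ℝ (Fin N) × ℝ | f p.1 ≤ (p.2 : EReal)})
    (z : EuclideanSpace ℝ (Fin N)) (δ M : ℝ) (hδ : 0 < δ)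
    (hM : ∀ y ∈ ball z δ, f y ≤ (M : EReal))
    (U : Set (EuclideanSpace ℝ (Fin N))) (hU : DensityOpen U)
    (x : EuclideanSpace ℝ (Fin N)) (hx : x ∈ U) (c : ℝ) (hfx : f x < (c : EReal))
    (hae : ∀ᵐ y ∂(volume.restrict U), (c : EReal) < f y) : False := by
  obtain ⟨t, hft, htc⟩ := EReal.lt_iff_exists_real_btwn.1 hfx
  replace hft : f x ≤ (t : EReal) := le_of_lt hft
  replace htc : t < c := by exact_mod_cast htc
  set d : ℝ := dist z x with hd
  have hd0 : 0 ≤ d := dist_nonneg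
  set D : ℝ := d + δ with hDdef
  have hD : 0 < D := by positivity
  set κ : ℝ≥0∞ := ENNReal.ofReal ((δ / D) ^ N) with hκdef
  have hκ0 : κ ≠ 0 := by
    rw [hκdef]; simp only [ne_eq, ENNReal.ofReal_eq_zero, not_le]; positivity
  have hκ1 : κ ≤ 1 := by
    rw [hκdef, ← ENNReal.ofReal_one]
    apply ENNReal.ofReal_le_ofReal
    apply pow_le_one₀ (by positivity)
    rw [div_le_one hD, hDdef]; linarith
  set lam0 : ℝ := min (1/2) ((c - t) / (2 * (|M - t| + 1))) with hlam0def
  have hlam0 : 0 < lam0 := lt_min (by norm_num) (div_pos (by linarith) (by positivity))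
  have h1κ : (1 : ℝ≥0∞) - κ < 1 := ENNReal.sub_lt_self ENNReal.one_ne_top one_ne_zero hκ0
  have E1 := (hU.2 x hx).eventually (eventually_gt_nhds h1κ)
  have E2 : ∀ᶠ r in nhdsWithin 0 (Set.Ioi 0), r < lam0 * D :=
    eventually_nhdsWithin_of_eventually_nhds (eventually_lt_nhds (by positivity))
  have E3 : ∀ᶠ r : ℝ in nhdsWithin 0 (Set.Ioi 0), r ∈ Set.Ioi 0 :=
    eventually_mem_nhdsWithin
  obtain ⟨r, hr1, hr2, hr0⟩ := (E1.and (E2.and E3)).exists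
  have hr0' : (0 : ℝ) < r := hr0
  set lam : ℝ := r / D with hlamdef
  have hlam : 0 < lam := by positivity
  have hlamlt : lam < lam0 := by rw [hlamdef, div_lt_iff₀ hD]; exact hr2
  have hlam1 : lam < 1 :=
    lt_of_lt_of_le hlamlt (le_trans (min_le_left _ _) (by norm_num))
  have hrlam : r = lam * D := by rw [hlamdef]; field_simp
  have habs : M - t ≤ |M - t| := le_abs_self _
  have habs0 : 0 ≤ |M - t| := abs_nonneg _
  have hlamle : lam ≤ (c - t) / (2 * (|M - t| + 1)) :=
    le_of_lt (hlamlt.trans_le (min_le_right _ _))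
  have htlam : t + lam * (M - t) < c := by
    have h1 : lam * (M - t) ≤ lam * |M - t| := mul_le_mul_of_nonneg_left habs hlam.le
    have h2 : lam * |M - t| ≤ ((c - t) / (2 * (|M - t| + 1))) * |M - t| :=
      mul_le_mul_of_nonneg_right hlamle habs0
    have h3 : ((c - t) / (2 * (|M - t| + 1))) * |M - t| < c - t := by
      rw [div_mul_eq_mul_div, div_lt_iff₀ (by positivity)]
      nlinarith
    linarith
  set m : EuclideanSpace ℝ (Fin N) := x + lam • (z - x) with hmdef
  have hmx : dist m x = lam * d := by
    rw [dist_eq_norm, hmdef, add_sub_cancel_left, norm_smul, Real.norm_eq_abs,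
      abs_of_pos hlam, hd, dist_eq_norm]
  have hsub : ball m (lam * δ) ⊆ ball x r := by
    intro p hp
    rw [mem_ball] at hp ⊢
    calc dist p x ≤ dist p m + dist m x := dist_triangle _ _ _
      _ < lam * δ + lam * d := by rw [hmx]; linarith
      _ = lam * D := by rw [hDdef]; ring
      _ = r := hrlam.symm
  have hfball : ∀ p ∈ ball m (lam * δ), f p < (c : EReal) := by
    intro p hp
    set y : EuclideanSpace ℝ (Fin N) := z + lam⁻¹ • (p - m) with hydef
    have hyz : y ∈ ball z δ := by
      rw [mem_ball, hydef, dist_eq_norm, add_sub_cancel_left, norm_smul, Real.norm_eq_abs,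
        abs_of_pos (inv_pos.2 hlam), inv_mul_lt_iff₀ hlam, ← dist_eq_norm]
      exact hp
    have hcx : ((x, t) : EuclideanSpace ℝ (Fin N) × ℝ) ∈
        {p : EuclideanSpace ℝ (Fin N) × ℝ | f p.1 ≤ (p.2 : EReal)} := hft
    have hcy : ((y, M) : EuclideanSpace ℝ (Fin N) × ℝ) ∈
        {p : EuclideanSpace ℝ (Fin N) × ℝ | f p.1 ≤ (p.2 : EReal)} := hM y hyz
    have hcomb := hf hcx hcy (by linarith : (0:ℝ) ≤ 1 - lam) hlam.le (by ring)
    simp only [Prod.smul_mk, Prod.mk_add_mk, Set.mem_setOf_eq, smul_eq_mul] at hcomb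
    have hpt : (1 - lam) • x + lam • y = p := by
      rw [hydef, hmdef, smul_add, smul_smul, mul_inv_cancel₀ hlam.ne', one_smul]
      module
    rw [hpt] at hcomb
    refine lt_of_le_of_lt hcomb ?_
    rw [EReal.coe_lt_coe_iff]
    nlinarith
  set Bs : Set (EuclideanSpace ℝ (Fin N)) := ball m (lam * δ) with hBsdef
  have hUB0 : volume (Bs ∩ U) = 0 := by
    rw [ae_iff] at hae
    have hsubT : Bs ⊆ {y | ¬ (c : EReal) < f y} :=
      fun p hp => not_lt.2 (le_of_lt (hfball p hp))
    have h0 := measure_mono_null hsubT hae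
    rwa [Measure.restrict_apply₀' hU.1] at h0
  have hvB0 : volume (ball x r) ≠ 0 := (measure_ball_pos volume x hr0').ne'
  have hvBtop : volume (ball x r) ≠ ⊤ := measure_ball_lt_top.ne
  have hBs : volume Bs = κ * volume (ball x r) := by
    rw [hBsdef, Measure.addHaar_ball_of_pos volume m (by positivity : (0:ℝ) < lam * δ),
      Measure.addHaar_ball_of_pos volume x hr0', hκdef, ← mul_assoc,
      ← ENNReal.ofReal_mul (by positivity)]
    congr 2
    rw [finrank_euclideanSpace_fin, ← mul_pow]
    congr 1
    rw [hrlam, hDdef]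
    field_simp
  have hCge : κ * volume (ball x r) ≤ volume (ball x r \ U) := by
    rw [← hBs]
    calc volume Bs = volume (Bs ∩ U) + volume (Bs \ U) :=
        (measure_inter_add_diff₀ Bs hU.1).symm
      _ = volume (Bs \ U) := by rw [hUB0, zero_add]
      _ ≤ volume (ball x r \ U) := measure_mono (Set.diff_subset_diff_left hsub)
  have hsplit : volume (U ∩ ball x r) + volume (ball x r \ U) = volume (ball x r) := by
    rw [Set.inter_comm]
    exact measure_inter_add_diff₀ (ball x r) hU.1
  have hCratio : κ ≤ volume (ball x r \ U) / volume (ball x r) := by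
    rw [ENNReal.le_div_iff_mul_le (Or.inl hvB0) (Or.inl hvBtop)]
    exact hCge
  have hratio : volume (U ∩ ball x r) / volume (ball x r)
      + volume (ball x r \ U) / volume (ball x r) = 1 := by
    rw [ENNReal.div_add_div_same, hsplit, ENNReal.div_self hvB0 hvBtop]
  have hA : volume (U ∩ ball x r) / volume (ball x r) ≤ 1 - κ := by
    apply ENNReal.le_sub_of_add_le_right (ne_top_of_le_ne_top ENNReal.one_ne_top hκ1)
    calc volume (U ∩ ball x r) / volume (ball x r) + κ
        ≤ volume (U ∩ ball x r) / volume (ball x r)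
          + volume (ball x r \ U) / volume (ball x r) := by
          exact add_le_add le_rfl hCratio
      _ = 1 := hratio
  exact absurd (lt_of_lt_of_le hr1 hA) (lt_irrefl _)

end key

theorem stmt_6 {N : ℕ} (f : EuclideanSpace ℝ (Fin N) → EReal)
    (hf : Convex ℝ {p : EuclideanSpace ℝ (Fin N) × ℝ | f p.1 ≤ (p.2 : EReal)}) :
    (∀ U : Set (EuclideanSpace ℝ (Fin N)), DensityOpen U →
        (⨅ x ∈ U, f x) = essInf f (volume.restrict U)) ↔
      ((∀ x, f x = ⊤) ∨ (interior {x | f x < ⊤}).Nonempty) := by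
  constructor
  · intro h
    by_contra hcon
    push_neg at hcon
    obtain ⟨hne, hint⟩ := hcon
    obtain ⟨x₀, hx₀⟩ := hne
    have hx₀' : f x₀ < ⊤ := lt_top_iff_ne_top.2 hx₀
    have hD0 : volume {x | f x < ⊤} = 0 := convex_measure_zero (dom_convex hf) hint
    have hUuniv : DensityOpen (Set.univ : Set (EuclideanSpace ℝ (Fin N))) := by
      refine ⟨MeasurableSet.univ.nullMeasurableSet, fun x _ => ?_⟩
      have hev : ∀ᶠ r : ℝ in nhdsWithin 0 (Set.Ioi 0),
          (1 : ℝ≥0∞) = volume (Set.univ ∩ ball x r) / volume (ball x r) := by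
        filter_upwards [eventually_mem_nhdsWithin] with r hr
        rw [Set.univ_inter, ENNReal.div_self (measure_ball_pos volume x hr).ne'
          measure_ball_lt_top.ne]
      exact Tendsto.congr' hev tendsto_const_nhds
    have heq := h _ hUuniv
    have hei : ∀ c : ℝ, (c : EReal) ≤ essInf f (volume.restrict Set.univ) := by
      intro c
      apply le_essInf_of_ae_le (hfbdd := by isBoundedDefault)
      rw [Measure.restrict_univ]
      filter_upwards [measure_eq_zero_iff_ae_notMem.1 hD0] with y hy
      have hy' : f y = ⊤ := by
        by_contra h'
        exact hy (lt_top_iff_ne_top.2 h')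
      rw [hy']
      exact le_top
    obtain ⟨c, hc⟩ := exists_real_ge_of_lt_top hx₀'
    have h2 : (⨅ x ∈ Set.univ, f x) ≤ f x₀ := iInf₂_le x₀ (Set.mem_univ _)
    have h3 : ((c + 1 : ℝ) : EReal) ≤ (c : EReal) :=
      (hei (c + 1)).trans ((heq.symm.le).trans (h2.trans hc))
    rw [EReal.coe_le_coe_iff] at h3
    linarith
  · rintro (htop | hint) U hU
    · have h1 : (⨅ x ∈ U, f x) = ⊤ := by simp [htop]
      have h2 : essInf f (volume.restrict U) = ⊤ := by
        have hft : f = fun _ => (⊤ : EReal) := funext htop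
        rw [hft, essInf_const_top]
      rw [h1, h2]
    · obtain ⟨z, δ, M, hδ, hM⟩ := bound_ball hf hint
      apply le_antisymm
      · apply le_essInf_of_ae_le (hfbdd := by isBoundedDefault)
        filter_upwards [ae_restrict_mem₀ hU.1] with y hy
        exact iInf₂_le y hy
      · apply le_iInf₂
        intro x hx
        by_contra hcon
        push_neg at hcon
        obtain ⟨c, hc1, hc2⟩ := EReal.exists_between_coe_real hcon
        have hae := ae_lt_of_lt_essInf hc2
        exact key hf z δ M hδ hM U hU x hx c hc1 hae
end

section
/- Let f, g : ℝ^N → ℝ be quasiconvex functions such that f = g almost everywhere with respect to Lebesgue measure. Suppose that the pointwise infimum of f over ℝ^N equals its essential infimum over ℝ^N, and likewise the pointwise infimum of g over ℝ^N equals its essential infimum over ℝ^N. Then for every x ∈ ℝ^N, f is continuous at x if and only if g is continuous at x, and at any such common point of continuity f(x) = g(x). -/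
open MeasureTheory Metric Filter Set

section Aux

variable {V : Type*} [NormedAddCommGroup V] [NormedSpace ℝ V] [FiniteDimensional ℝ V]

/-- For a convex set in a finite-dimensional space, the interior of the closure is
contained in the set. -/
lemma aux_interior_closure_subset_s8 {C : Set V} (hC : Convex ℝ C) :
    interior (closure C) ⊆ C := by
  intro z hz
  -- the closure has nonempty interior, so its affine span is everything
  have hspan : affineSpan ℝ (closure C) = ⊤ :=
    (hC.closure.interior_nonempty_iff_affineSpan_eq_top).mp ⟨z, hz⟩
  have hclosed : closure C ⊆ (affineSpan ℝ C : Set V) :=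
    closure_minimal (subset_affineSpan ℝ C)
      (affineSpan ℝ C).closed_of_finiteDimensional
  have hspanC : affineSpan ℝ C = ⊤ :=
    top_unique (hspan ▸ affineSpan_le.mpr hclosed)
  obtain ⟨a, ha⟩ : (interior C).Nonempty :=
    hC.interior_nonempty_iff_affineSpan_eq_top.mpr hspanC
  obtain ⟨ε, εpos, hball⟩ := Metric.isOpen_iff.mp isOpen_interior z hz
  set t : ℝ := ε / (2 * (‖z - a‖ + 1)) with ht
  have hden : (0:ℝ) < ‖z - a‖ + 1 := by positivity
  have htpos : 0 < t := by positivity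
  set w : V := z + t • (z - a) with hw
  have hwball : w ∈ ball z ε := by
    rw [mem_ball, dist_eq_norm]
    have : w - z = t • (z - a) := by rw [hw]; abel
    rw [this, norm_smul, Real.norm_eq_abs, abs_of_pos htpos]
    calc t * ‖z - a‖ < t * (‖z - a‖ + 1) := by
          exact mul_lt_mul_of_pos_left (by linarith) htpos
      _ = ε / 2 := by
          rw [ht]; field_simp
      _ < ε := by linarith
  have hwcl : w ∈ closure C := interior_subset (hball hwball)
  have hcombo : (t / (1 + t)) • a + (1 / (1 + t)) • w = z := by
    have h1t : (1 + t) ≠ 0 := by positivity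
    rw [hw, smul_add, smul_smul, smul_sub]
    rw [show (1 / (1 + t)) * t = t / (1 + t) by ring]
    have : ∀ u v : V, (t / (1 + t)) • a + ((1 / (1 + t)) • z +
        ((t / (1 + t)) • z - (t / (1 + t)) • a)) =
        (1 / (1 + t) + t / (1 + t)) • z := by
      intro _ _
      rw [add_smul]; abel
    rw [this z z, show 1 / (1 + t) + t / (1 + t) = 1 by field_simp, one_smul]
  have hsum : t / (1 + t) + 1 / (1 + t) = 1 := by
    field_simp
    ring
  have := hC.combo_interior_closure_mem_interior (a := t / (1 + t)) (b := 1 / (1 + t))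
    ha hwcl (div_pos htpos (by positivity)) (by positivity) hsum
  rw [hcombo] at this
  exact interior_subset this

end Aux

lemma aux_upper {N : ℕ} {f g : EuclideanSpace ℝ (Fin N) → ℝ}
    (hg : ∀ α : ℝ, Convex ℝ {x | g x < α}) (hfg : f =ᵐ[volume] g)
    {x : EuclideanSpace ℝ (Fin N)} (hfx : ContinuousAt f x)
    {β : ℝ} (hβ : f x < β) : ∀ᶠ y in nhds x, g y < β := by
  have hmem : f ⁻¹' Iio β ∈ nhds x := hfx (Iio_mem_nhds hβ)
  obtain ⟨r, rpos, hr⟩ := Metric.mem_nhds_iff.mp hmem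
  have hD : Dense {y | f y = g y} := Measure.dense_of_ae hfg
  have hsub : ball x r ∩ {y | f y = g y} ⊆ {y | g y < β} := by
    rintro y ⟨hy1, hy2⟩
    have : f y < β := hr hy1
    show g y < β
    rw [← hy2]
    exact this
  have hball : ball x r ⊆ closure {y | g y < β} :=
    (hD.open_subset_closure_inter isOpen_ball).trans (closure_mono hsub)
  have hball2 : ball x r ⊆ {y | g y < β} := by
    have : ball x r ⊆ interior (closure {y | g y < β}) := by
      rw [← isOpen_ball.interior_eq]
      exact interior_mono hball
    exact this.trans (aux_interior_closure_subset_s8 (hg β))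
  filter_upwards [ball_mem_nhds x rpos] with y hy using hball2 hy

lemma aux_lower {N : ℕ} {f g : EuclideanSpace ℝ (Fin N) → ℝ}
    (hg : ∀ α : ℝ, Convex ℝ {x | g x < α}) (hfg : f =ᵐ[volume] g)
    (hgi : (⨅ x, (g x : EReal)) = essInf (fun x => (g x : EReal)) volume)
    {x : EuclideanSpace ℝ (Fin N)} (hfx : ContinuousAt f x)
    {α : ℝ} (hα : α < f x) : ∀ᶠ y in nhds x, α ≤ g y := by
  set α' : ℝ := (α + f x) / 2 with hα'
  have hαα' : α < α' := by rw [hα']; linarith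
  have hα'f : α' < f x := by rw [hα']; linarith
  have hmem : f ⁻¹' Ioi α' ∈ nhds x := hfx (Ioi_mem_nhds hα'f)
  obtain ⟨r, rpos, hr⟩ := Metric.mem_nhds_iff.mp hmem
  set C : Set (EuclideanSpace ℝ (Fin N)) := {y | g y < α} with hC
  -- `C ∩ ball x r` is a null set
  have hnull : volume (C ∩ ball x r) = 0 := by
    refine measure_mono_null (t := {y | ¬ f y = g y}) ?_ hfg
    rintro y ⟨hy1, hy2⟩
    have h1 : α' < f y := hr hy2
    have h2 : g y < α := hy1
    simp only [mem_setOf_eq]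
    intro h
    rw [h] at h1; linarith
  filter_upwards [ball_mem_nhds x rpos] with y hy
  by_contra hgy
  push_neg at hgy
  have hyC : y ∈ C := hgy
  rcases eq_empty_or_nonempty (interior C) with hint | ⟨z, hz⟩
  · -- empty interior: C is null, contradicting the essInf hypothesis
    have hCnull : volume C = 0 := by
      have h1 : closure C = frontier C := by
        rw [frontier, hint, diff_empty]
      have h2 : volume (frontier C) = 0 := (hg α).addHaar_frontier volume
      exact measure_mono_null subset_closure (h1 ▸ h2)
    have hae : ∀ᵐ z ∂(volume : Measure (EuclideanSpace ℝ (Fin N))),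
        (fun _ => (α : EReal)) z ≤ (fun z => (g z : EReal)) z := by
      rw [ae_iff]
      refine measure_mono_null (t := C) ?_ hCnull
      intro z hz
      simp only [mem_setOf_eq, not_le, EReal.coe_lt_coe_iff] at hz ⊢
      exact hz
    have h1 : (α : EReal) ≤ essInf (fun z => (g z : EReal)) volume :=
      le_essInf_of_ae_le _ hae
    have h2 : (α : EReal) ≤ (g y : EReal) :=
      le_trans (hgi ▸ h1) (iInf_le (fun z => (g z : EReal)) y)
    rw [EReal.coe_le_coe_iff] at h2
    linarith
  · -- nonempty interior: find an interior point inside the ball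
    have hseg : openSegment ℝ z y ⊆ interior C :=
      (hg α).openSegment_interior_self_subset_interior hz hyC
    have hten : Tendsto (fun t : ℝ => (1 - t) • z + t • y) (nhds 1) (nhds y) := by
      have hc : Continuous (fun t : ℝ => (1 - t) • z + t • y) := by
        continuity
      have := hc.tendsto 1
      simpa using this
    have hev1 : ∀ᶠ t : ℝ in nhds 1, (1 - t) • z + t • y ∈ ball x r :=
      hten (isOpen_ball.mem_nhds hy)
    have hev2 : ∀ᶠ t : ℝ in nhdsWithin 1 (Iio 1), (1 - t) • z + t • y ∈ ball x r :=
      hev1.filter_mono nhdsWithin_le_nhds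
    have hev3 : ∀ᶠ t : ℝ in nhdsWithin 1 (Iio 1), t ∈ Ioo (0:ℝ) 1 := by
      have h1 : ∀ᶠ t : ℝ in nhdsWithin 1 (Iio 1), t ∈ Ioi (0:ℝ) :=
        eventually_nhdsWithin_of_eventually_nhds (eventually_gt_nhds one_pos)
      have h2 : ∀ᶠ t : ℝ in nhdsWithin 1 (Iio 1), t ∈ Iio (1:ℝ) :=
        eventually_mem_nhdsWithin
      filter_upwards [h1, h2] with t ht1 ht2 using ⟨ht1, ht2⟩
    obtain ⟨t, htb, ht01⟩ := (hev2.and hev3).exists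
    have hwseg : (1 - t) • z + t • y ∈ openSegment ℝ z y :=
      ⟨1 - t, t, by linarith [ht01.2], ht01.1, by ring, rfl⟩
    have hwint : (1 - t) • z + t • y ∈ interior C ∩ ball x r :=
      ⟨hseg hwseg, htb⟩
    have hpos : 0 < volume (interior C ∩ ball x r) :=
      (isOpen_interior.inter isOpen_ball).measure_pos volume ⟨_, hwint⟩
    have : volume (interior C ∩ ball x r) = 0 :=
      measure_mono_null (inter_subset_inter_left _ interior_subset) hnull
    rw [this] at hpos
    exact absurd hpos (lt_irrefl 0)

lemma aux_main {N : ℕ} {f g : EuclideanSpace ℝ (Fin N) → ℝ}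
    (hg : ∀ α : ℝ, Convex ℝ {x | g x < α}) (hfg : f =ᵐ[volume] g)
    (hgi : (⨅ x, (g x : EReal)) = essInf (fun x => (g x : EReal)) volume)
    {x : EuclideanSpace ℝ (Fin N)} (hfx : ContinuousAt f x) :
    ContinuousAt g x ∧ g x = f x := by
  have hT : Tendsto g (nhds x) (nhds (f x)) := by
    refine tendsto_order.2 ⟨fun a ha => ?_, fun b hb => ?_⟩
    · have h := aux_lower hg hfg hgi hfx (α := (a + f x) / 2) (by linarith)
      filter_upwards [h] with y hy
      have : a < (a + f x) / 2 := by linarith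
      linarith
    · exact aux_upper hg hfg hfx hb
  have hgle : g x ≤ f x := by
    by_contra h
    push_neg at h
    have := (aux_upper hg hfg hfx (β := (f x + g x) / 2) (by linarith)).self_of_nhds
    linarith
  have hfle : f x ≤ g x := by
    by_contra h
    push_neg at h
    have := (aux_lower hg hfg hgi hfx (α := (g x + f x) / 2) (by linarith)).self_of_nhds
    linarith
  have heq : g x = f x := le_antisymm hgle hfle
  refine ⟨?_, heq⟩
  unfold ContinuousAt
  rw [heq]
  exact hT

theorem stmt_8 {N : ℕ} (f g : EuclideanSpace ℝ (Fin N) → ℝ)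
    (hf : ∀ α : ℝ, Convex ℝ {x | f x < α}) (hg : ∀ α : ℝ, Convex ℝ {x | g x < α})
    (hfg : f =ᵐ[volume] g)
    (hfi : (⨅ x, (f x : EReal)) = essInf (fun x => (f x : EReal)) volume)
    (hgi : (⨅ x, (g x : EReal)) = essInf (fun x => (g x : EReal)) volume) :
    ∀ x : EuclideanSpace ℝ (Fin N),
      (ContinuousAt f x ↔ ContinuousAt g x) ∧
        (ContinuousAt f x → ContinuousAt g x → f x = g x) := by
  intro x
  refine ⟨⟨fun h => (aux_main hg hfg hgi h).1, fun h => (aux_main hf hfg.symm hfi h).1⟩,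
    fun hcf _ => ?_⟩
  exact (aux_main hg hfg hgi hcf).2.symm
end

section
/- Let f, g : ℝ^N → ℝ be quasiconvex functions such that f = g almost everywhere with respect to Lebesgue measure, and let m ∈ [−∞, ∞) denote their common essential infimum over ℝ^N. For x ∈ ℝ^N, the point x is a point of continuity of g but not a point of continuity of f if and only if: x is a point of continuity of g, m is finite, g(x) = m, and x belongs to the union over real α < m of the closures of the sublevel sets F_α := {y ∈ ℝ^N : f(y) < α}. -/
open MeasureTheory Metric Filter

section Aux

open Set Topology

variable {E : Type*} [NormedAddCommGroup E] [NormedSpace ℝ E]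

lemma my_closure_sub_closure_interior {s : Set E} (hs : Convex ℝ s)
    (hne : (interior s).Nonempty) : closure s ⊆ closure (interior s) := by
  obtain ⟨y, hy⟩ := hne
  intro z hz
  have htend : Filter.Tendsto (fun t : ℝ => z + t • (y - z)) (𝓝[>] (0:ℝ)) (𝓝 z) := by
    have : Filter.Tendsto (fun t : ℝ => z + t • (y - z)) (𝓝 (0:ℝ)) (𝓝 (z + (0:ℝ) • (y - z))) :=
      (tendsto_id.smul_const _).const_add _
    simpa using this.mono_left nhdsWithin_le_nhds
  refine mem_closure_of_tendsto htend ?_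
  filter_upwards [Ioo_mem_nhdsGT_of_mem (by norm_num : (0:ℝ) ∈ Set.Ico 0 1)] with t ht
  exact hs.add_smul_sub_mem_interior' hz hy ⟨ht.1, ht.2.le⟩

lemma my_interior_closure_sub_interior {s : Set E} (hs : Convex ℝ s)
    (hne : (interior s).Nonempty) : interior (closure s) ⊆ interior s := by
  obtain ⟨y, hy⟩ := hne
  intro z hz
  have hcont : Filter.Tendsto (fun t : ℝ => z + t • (z - y)) (𝓝 (0:ℝ)) (𝓝 z) := by
    have : Filter.Tendsto (fun t : ℝ => z + t • (z - y)) (𝓝 (0:ℝ)) (𝓝 (z + (0:ℝ) • (z - y))) :=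
      (tendsto_id.smul_const _).const_add _
    simpa using this
  have : ∀ᶠ t : ℝ in 𝓝 (0:ℝ), z + t • (z - y) ∈ interior (closure s) :=
    hcont (isOpen_interior.mem_nhds hz)
  obtain ⟨ε, hε, hball⟩ := Metric.eventually_nhds_iff.1 this
  set e : ℝ := ε / 2 with he
  have he0 : 0 < e := by positivity
  have hzed : z + e • (z - y) ∈ closure s := by
    refine interior_subset (hball (y := e) ?_)
    rw [Real.dist_eq, sub_zero, abs_of_pos he0, he]
    exact half_lt_self hε
  set w : E := z + e • (z - y) with hw
  have ht1 : e / (1 + e) ∈ Set.Ioc (0:ℝ) 1 := by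
    constructor
    · positivity
    · rw [div_le_one (by linarith)]; linarith
  have := hs.add_smul_sub_mem_interior' hzed hy ht1
  have hkey : w + (e / (1 + e)) • (y - w) = z := by
    rw [hw]
    have h1e : (1:ℝ) + e ≠ 0 := by linarith
    match_scalars <;> field_simp <;> ring
  rwa [hkey] at this

variable [MeasurableSpace E] [BorelSpace E] [FiniteDimensional ℝ E]
  (μ : Measure E) [μ.IsAddHaarMeasure]

lemma my_interior_nonempty {s : Set E} (hs : Convex ℝ s) (hpos : 0 < μ s) :
    (interior s).Nonempty := by
  by_contra h
  rw [Set.not_nonempty_iff_eq_empty] at h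
  have h1 : s ⊆ frontier s := by
    intro y hy
    exact ⟨subset_closure hy, by simp [mem_interior_iff_mem_nhds, h]⟩
  have := measure_mono_null h1 (hs.addHaar_frontier μ)
  exact absurd this hpos.ne'

/-- Convex sets that agree a.e. and have positive measure have the same closure
and same interior. -/
lemma my_convex_ae_eq {A B : Set E} (hA : Convex ℝ A) (hB : Convex ℝ B)
    (hAB : μ (A \ B) = 0) (hBA : μ (B \ A) = 0) (hposA : 0 < μ A) :
    closure A = closure B ∧ interior A = interior B := by
  have hposB : 0 < μ B := by
    by_contra h
    push_neg at h
    have hB0 : μ B = 0 := le_antisymm h bot_le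
    have : μ A ≤ μ (A \ B) + μ B := by
      refine le_trans (measure_mono ?_) (measure_union_le _ _)
      intro y hy; by_cases hyB : y ∈ B
      · exact Or.inr hyB
      · exact Or.inl ⟨hy, hyB⟩
    rw [hAB, hB0] at this
    simpa using lt_of_lt_of_le hposA this
  have hiA : (interior A).Nonempty := my_interior_nonempty μ hA hposA
  have hiB : (interior B).Nonempty := my_interior_nonempty μ hB hposB
  have key : ∀ A' B' : Set E, Convex ℝ A' → μ (A' \ B') = 0 →
      (interior A').Nonempty → interior A' ⊆ closure B' := by
    intro A' B' hA' hAB' hiA'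
    intro z hz
    by_contra hzc
    have hopen : IsOpen (interior A' \ closure B') := isOpen_interior.sdiff isClosed_closure
    have hsub : interior A' \ closure B' ⊆ A' \ B' := fun y hy =>
      ⟨interior_subset hy.1, fun hyB => hy.2 (subset_closure hyB)⟩
    have hpos := hopen.measure_pos μ ⟨z, hz, hzc⟩
    exact absurd (measure_mono_null hsub hAB') hpos.ne'
  have hAB' : closure A ⊆ closure B := by
    refine (my_closure_sub_closure_interior hA hiA).trans ?_
    refine (closure_mono (key A B hA hAB hiA)).trans ?_
    rw [closure_closure]
  have hBA' : closure B ⊆ closure A := by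
    refine (my_closure_sub_closure_interior hB hiB).trans ?_
    refine (closure_mono (key B A hB hBA hiB)).trans ?_
    rw [closure_closure]
  refine ⟨le_antisymm hAB' hBA', le_antisymm ?_ ?_⟩
  · exact (interior_maximal (key A B hA hAB hiA) isOpen_interior).trans
      (my_interior_closure_sub_interior hB hiB)
  · exact (interior_maximal (key B A hB hBA hiB) isOpen_interior).trans
      (my_interior_closure_sub_interior hA hiA)

end Aux

section Main

open Set Topology

variable {N : ℕ}

lemma my_nhds_pos {x : EuclideanSpace ℝ (Fin N)} {s : Set (EuclideanSpace ℝ (Fin N))}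
    (hs : s ∈ 𝓝 x) : 0 < volume s := by
  obtain ⟨t, hts, hto, hxt⟩ := _root_.mem_nhds_iff.1 hs
  exact lt_of_lt_of_le (hto.measure_pos volume ⟨x, hxt⟩) (measure_mono hts)

lemma my_sublevel_pos (f : EuclideanSpace ℝ (Fin N) → ℝ) (m : EReal)
    (hm : m = essInf (fun x => (f x : EReal)) volume)
    {α : ℝ} (hα : m < (α : EReal)) : 0 < volume {y | f y < α} := by
  by_contra h
  push_neg at h
  have h0 : volume {y | f y < α} = 0 := le_antisymm h bot_le
  have hmem : (α : EReal) ∈ {a : EReal | volume {x | (f x : EReal) < a} = 0} := by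
    have he : {x : EuclideanSpace ℝ (Fin N) | (f x : EReal) < (α : EReal)} = {y | f y < α} := by
      ext y; simp [EReal.coe_lt_coe_iff]
    rw [Set.mem_setOf_eq, he]; exact h0
  have := le_sSup hmem
  rw [← essInf_eq_sSup, ← hm] at this
  exact absurd hα (not_lt.2 this)

lemma my_sublevel_null (g : EuclideanSpace ℝ (Fin N) → ℝ) (m : EReal)
    (hm : m = essInf (fun x => (g x : EReal)) volume)
    {β : ℝ} (hβ : (β : EReal) < m) : volume {y | g y < β} = 0 := by
  rw [hm, essInf_eq_sSup] at hβ
  obtain ⟨a, ha, hβa⟩ := lt_sSup_iff.1 hβ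
  refine measure_mono_null ?_ ha
  intro y hy
  have h1 : (g y : EReal) < (β : EReal) := by exact_mod_cast hy
  exact lt_trans h1 hβa

lemma my_cont (f g : EuclideanSpace ℝ (Fin N) → ℝ)
    (hf : ∀ α : ℝ, Convex ℝ {x | f x < α}) (hg : ∀ α : ℝ, Convex ℝ {x | g x < α})
    (hfg : f =ᵐ[volume] g) (m : EReal)
    (hm : m = essInf (fun x => (f x : EReal)) volume) (hmtop : m ≠ ⊤)
    (x : EuclideanSpace ℝ (Fin N)) (hgc : ContinuousAt g x)
    (hcase : m < (g x : EReal) ∨ ((g x : EReal) = m ∧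
      ∀ α : ℝ, (α : EReal) < m → x ∉ closure {y | f y < α})) :
    ContinuousAt f x := by
  set c : ℝ := g x with hc
  have hmc : m ≤ (c : EReal) := by
    rcases hcase with h | ⟨h, _⟩
    · exact h.le
    · exact h.symm.le
  have hnull : volume {y | f y ≠ g y} = 0 := by
    have := hfg
    rwa [Filter.EventuallyEq, ae_iff] at this
  have hdiff : ∀ α : ℝ, volume ({y | f y < α} \ {y | g y < α}) = 0 ∧
      volume ({y | g y < α} \ {y | f y < α}) = 0 := by
    intro α
    constructor
    · refine measure_mono_null ?_ hnull
      rintro y ⟨h1, h2⟩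
      simp only [Set.mem_setOf_eq, not_lt] at h1 h2 ⊢
      intro he; rw [he] at h1; exact absurd h1 (not_lt.2 h2)
    · refine measure_mono_null ?_ hnull
      rintro y ⟨h1, h2⟩
      simp only [Set.mem_setOf_eq, not_lt] at h1 h2 ⊢
      intro he; rw [← he] at h1; exact absurd h1 (not_lt.2 h2)
  have ceq : ∀ α : ℝ, m < (α : EReal) →
      closure {y | f y < α} = closure {y | g y < α} ∧
      interior {y | f y < α} = interior {y | g y < α} := fun α hα =>
    my_convex_ae_eq volume (hf α) (hg α) (hdiff α).1 (hdiff α).2 (my_sublevel_pos f m hm hα)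
  have E1 : ∀ b : ℝ, c < b → ∀ᶠ y in 𝓝 x, f y < b := by
    intro b hb
    set α : ℝ := (c + b) / 2 with hα
    have hcα : c < α := by rw [hα]; linarith
    have hαb : α < b := by rw [hα]; linarith
    have hmα : m < (α : EReal) := lt_of_le_of_lt hmc (by exact_mod_cast hcα)
    have hBnb : {y | g y < α} ∈ 𝓝 x := hgc.preimage_mem_nhds (Iio_mem_nhds hcα)
    have hxint : x ∈ interior {y | f y < α} := by
      rw [(ceq α hmα).2]
      exact mem_interior_iff_mem_nhds.2 hBnb
    filter_upwards [mem_interior_iff_mem_nhds.1 hxint] with y hy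
    exact lt_trans hy hαb
  have E2 : ∀ a : ℝ, a < c → ∀ᶠ y in 𝓝 x, a < f y := by
    intro a ha
    obtain ⟨α, haα, hαc, hxnot⟩ : ∃ α : ℝ, a < α ∧ α ≤ c ∧ x ∉ closure {y | f y < α} := by
      rcases hcase with hlt | ⟨hceq, hx⟩
      · obtain ⟨z, hmz, hzc⟩ := exists_between hlt
        have hzbot : z ≠ ⊥ := fun h => absurd (h ▸ hmz) not_lt_bot
        have hztop : z ≠ ⊤ := fun h => by
          rw [h] at hzc; exact absurd hzc (not_lt.2 le_top)
        set α0 : ℝ := z.toReal with hα0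
        have hz : (α0 : EReal) = z := EReal.coe_toReal hztop hzbot
        have hα0c : α0 < c := by
          have := hzc; rw [← hz] at this; exact_mod_cast this
        refine ⟨max α0 ((a + c) / 2), ?_, ?_, ?_⟩
        · exact lt_of_lt_of_le (by linarith) (le_max_right _ _)
        · exact le_of_lt (max_lt hα0c (by linarith))
        have hmα : m < ((max α0 ((a + c) / 2) : ℝ) : EReal) := by
          refine lt_of_lt_of_le (hz ▸ hmz) ?_
          exact_mod_cast le_max_left _ _
        rw [(ceq _ hmα).1]
        intro hcl
        have hVα : {y | max α0 ((a + c) / 2) < g y} ∈ 𝓝 x :=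
          hgc.preimage_mem_nhds (Ioi_mem_nhds (max_lt hα0c (by linarith)))
        obtain ⟨y, hy1, hy2⟩ := mem_closure_iff_nhds.1 hcl _ hVα
        simp only [Set.mem_setOf_eq] at hy1 hy2
        exact absurd hy2 (not_lt.2 (le_of_lt hy1))
      · refine ⟨(a + c) / 2, by linarith, by linarith, ?_⟩
        refine hx _ ?_
        rw [← hceq]
        exact_mod_cast (by linarith : (a + c) / 2 < c)
    have hopen : (closure {y | f y < α})ᶜ ∈ 𝓝 x :=
      isClosed_closure.isOpen_compl.mem_nhds hxnot
    filter_upwards [hopen] with y hy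
    have : ¬ f y < α := fun h => hy (subset_closure h)
    linarith [not_lt.1 this]
  have hfx : f x = c := by
    refine le_antisymm ?_ ?_
    · by_contra h
      push_neg at h
      have := (E1 ((c + f x) / 2) (by linarith)).self_of_nhds
      linarith
    · by_contra h
      push_neg at h
      have := (E2 ((f x + c) / 2) (by linarith)).self_of_nhds
      linarith
  rw [ContinuousAt, hfx]
  refine tendsto_order.2 ⟨fun a ha => E2 a ha, fun b hb => E1 b hb⟩

end Main

open Topology Set

theorem stmt_13 {N : ℕ} (f g : EuclideanSpace ℝ (Fin N) → ℝ)
    (hf : ∀ α : ℝ, Convex ℝ {x | f x < α}) (hg : ∀ α : ℝ, Convex ℝ {x | g x < α})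
    (hfg : f =ᵐ[volume] g) (m : EReal)
    (hm : m = essInf (fun x => (f x : EReal)) volume) (hmtop : m ≠ ⊤)
    (x : EuclideanSpace ℝ (Fin N)) :
    (ContinuousAt g x ∧ ¬ ContinuousAt f x) ↔
      (ContinuousAt g x ∧ m ≠ ⊥ ∧ (g x : EReal) = m ∧
        x ∈ ⋃ α ∈ {α : ℝ | (α : EReal) < m}, closure {y | f y < α}) := by
  have hmg : m = essInf (fun x => (g x : EReal)) volume := by
    rw [hm]; exact essInf_congr_ae (hfg.mono fun y h => by simp only [h])
  constructor
  · rintro ⟨hgc, hfc⟩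
    have hmle : m ≤ (g x : EReal) := by
      by_contra hlt
      push_neg at hlt
      have hbot : m ≠ ⊥ := fun h => by rw [h] at hlt; exact not_lt_bot hlt
      have hmr : ((m.toReal : ℝ) : EReal) = m := EReal.coe_toReal hmtop hbot
      have hgxm : g x < m.toReal := by
        rw [← hmr] at hlt; exact_mod_cast hlt
      set β : ℝ := (g x + m.toReal) / 2 with hβ
      have h1 : g x < β := by rw [hβ]; linarith
      have h2 : (β : EReal) < m := by
        rw [← hmr]; exact_mod_cast (by rw [hβ]; linarith : β < m.toReal)
      have hpos : 0 < volume {y | g y < β} :=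
        my_nhds_pos (hgc.preimage_mem_nhds (Iio_mem_nhds h1))
      rw [my_sublevel_null g m hmg h2] at hpos
      exact lt_irrefl _ hpos
    by_cases hceq : (g x : EReal) = m
    · have hbot : m ≠ ⊥ := fun h => by rw [h] at hceq; exact (EReal.coe_ne_bot _) hceq
      refine ⟨hgc, hbot, hceq, ?_⟩
      by_contra hnot
      refine hfc (my_cont f g hf hg hfg m hm hmtop x hgc (Or.inr ⟨hceq, ?_⟩))
      intro α hα hcl
      exact hnot (Set.mem_biUnion hα hcl)
    · have hlt : m < (g x : EReal) := lt_of_le_of_ne hmle fun h => hceq h.symm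
      exact absurd (my_cont f g hf hg hfg m hm hmtop x hgc (Or.inl hlt)) hfc
  · rintro ⟨hgc, hbot, hgx, hmem⟩
    refine ⟨hgc, fun hfc => ?_⟩
    simp only [Set.mem_iUnion, Set.mem_setOf_eq, exists_prop] at hmem
    obtain ⟨α, hα, hcl⟩ := hmem
    have hne : (𝓝 x ⊓ ae (volume : Measure (EuclideanSpace ℝ (Fin N)))).NeBot := by
      rw [Filter.inf_neBot_iff]
      intro s hs t ht
      by_contra hemp
      rw [Set.not_nonempty_iff_eq_empty] at hemp
      have hsub : s ⊆ tᶜ := fun y hy hyt => Set.eq_empty_iff_forall_notMem.1 hemp y ⟨hy, hyt⟩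
      exact absurd (measure_mono_null hsub (mem_ae_iff.1 ht)) (my_nhds_pos hs).ne'
    have hfgx : f x = g x := by
      have t1 : Filter.Tendsto f (𝓝 x ⊓ ae volume) (𝓝 (f x)) := hfc.mono_left inf_le_left
      have t2 : Filter.Tendsto f (𝓝 x ⊓ ae volume) (𝓝 (g x)) :=
        (hgc.mono_left inf_le_left).congr' (hfg.symm.filter_mono inf_le_right)
      exact tendsto_nhds_unique t1 t2
    have hcp : ClusterPt x (Filter.principal {y | f y < α}) := mem_closure_iff_clusterPt.1 hcl
    haveI : (𝓝 x ⊓ Filter.principal {y | f y < α}).NeBot := hcp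
    have t3 : Filter.Tendsto f (𝓝 x ⊓ Filter.principal {y | f y < α}) (𝓝 (f x)) :=
      hfc.mono_left inf_le_left
    have hev : ∀ᶠ y in 𝓝 x ⊓ Filter.principal {y | f y < α}, f y ≤ α := by
      filter_upwards [Filter.mem_inf_of_right (Filter.mem_principal_self _)] with y hy
      exact le_of_lt hy
    have hfxα := le_of_tendsto t3 hev
    have hαg : α < g x := by
      have h5 : (α : EReal) < (g x : EReal) := by rw [hgx]; exact hα
      exact_mod_cast h5
    rw [hfgx] at hfxα
    linarith
end

section
/- Let f, g : ℝ^N → ℝ be quasiconvex functions such that f = g almost everywhere with respect to Lebesgue measure, and let m ∈ [−∞, ∞) denote their common essential infimum over ℝ^N. Then every point of continuity of g is a point of continuity of f if and only if there is no point x of continuity of g such that m is finite, g(x) = m, and x is the limit of a sequence (x_n) in ℝ^N with f(x_n) < α for some real α < m and every n. In that case, f(x) = g(x) at every point x of continuity of g. -/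
open MeasureTheory Metric Filter

section Aux

variable {N : ℕ}

lemma aux_interior_nonempty_of_pos {C : Set (EuclideanSpace ℝ (Fin N))} (hC : Convex ℝ C)
    (hpos : 0 < volume C) : (interior C).Nonempty := by
  by_contra h
  rw [Set.not_nonempty_iff_eq_empty] at h
  have h2 : C ⊆ frontier C := fun y hy => ⟨subset_closure hy, by simp [h]⟩
  exact absurd (measure_mono_null h2 (hC.addHaar_frontier volume)) hpos.ne'

lemma aux_pos_inter_of_null_diff {C : Set (EuclideanSpace ℝ (Fin N))}
    {x : EuclideanSpace ℝ (Fin N)} {r : ℝ} (hr : 0 < r)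
    (hnull : volume (ball x r \ C) = 0) : 0 < volume (ball x r ∩ C) := by
  by_contra h
  push_neg at h
  have h0 : volume (ball x r ∩ C) = 0 := le_antisymm h zero_le
  have h1 := measure_le_inter_add_diff volume (ball x r) C
  rw [h0, hnull, add_zero] at h1
  exact absurd (le_antisymm h1 zero_le) (measure_ball_pos volume x hr).ne'

lemma aux_ball_subset_closure {C : Set (EuclideanSpace ℝ (Fin N))}
    {x : EuclideanSpace ℝ (Fin N)} {r : ℝ}
    (hnull : volume (ball x r \ C) = 0) : ball x r ⊆ closure C := by
  intro y hy
  rw [_root_.mem_closure_iff]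
  intro o ho hyo
  by_contra hne
  rw [Set.not_nonempty_iff_eq_empty] at hne
  have hsub : o ∩ ball x r ⊆ ball x r \ C := by
    intro w ⟨hw1, hw2⟩
    refine ⟨hw2, fun hwC => ?_⟩
    exact absurd (Set.mem_inter hw1 hwC) (by simp [hne])
  have hpos : 0 < volume (o ∩ ball x r) :=
    (ho.inter isOpen_ball).measure_pos volume ⟨y, hyo, hy⟩
  exact absurd (measure_mono_null hsub hnull) hpos.ne'

lemma aux_ball_subset_convex {C : Set (EuclideanSpace ℝ (Fin N))} (hC : Convex ℝ C)
    {x : EuclideanSpace ℝ (Fin N)} {r : ℝ} (hr : 0 < r)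
    (hnull : volume (ball x r \ C) = 0) : ball x r ⊆ C := by
  obtain ⟨z, hz⟩ := aux_interior_nonempty_of_pos hC
    (lt_of_lt_of_le (aux_pos_inter_of_null_diff hr hnull) (measure_mono Set.inter_subset_right))
  intro y hy
  rcases eq_or_ne y z with rfl | hyz
  · exact interior_subset hz
  · have hnorm : (0:ℝ) < ‖y - z‖ := by
      rw [norm_pos_iff, sub_ne_zero]; exact hyz
    set t : ℝ := (r - dist y x) / (2 * ‖y - z‖) with hts
    have hdyx : dist y x < r := mem_ball.mp hy
    have ht : 0 < t := div_pos (by linarith) (by linarith)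
    set y' := y + t • (y - z) with hy's
    have hy'ball : y' ∈ ball x r := by
      have hd : dist y' y = t * ‖y - z‖ := by
        rw [hy's, dist_eq_norm]
        simp [norm_smul, abs_of_pos ht]
      have h2 : t * ‖y - z‖ = (r - dist y x) / 2 := by
        rw [hts]; field_simp
      calc dist y' x ≤ dist y' y + dist y x := dist_triangle _ _ _
        _ = (r - dist y x)/2 + dist y x := by rw [hd, h2]
        _ < r := by linarith
    have hy'cl : y' ∈ closure C := aux_ball_subset_closure hnull hy'ball
    have hcombo := hC.combo_interior_closure_mem_interior hz hy'cl
      (a := t/(1+t)) (b := 1 - t/(1+t)) (div_pos ht (by linarith))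
      (by rw [sub_nonneg]; exact div_le_one_of_le₀ (by linarith) (by linarith)) (by ring)
    have heq : (t/(1+t)) • z + (1 - t/(1+t)) • y' = y := by
      rw [hy's]
      have h1 : (1:ℝ) + t ≠ 0 := by linarith
      match_scalars <;> field_simp <;> ring
    rw [heq] at hcombo
    exact interior_subset hcombo

lemma aux_sublevel_null {f : EuclideanSpace ℝ (Fin N) → ℝ} {m : EReal}
    (hm : m = essInf (fun x => (f x : EReal)) volume) {β : ℝ} (h : (β : EReal) < m) :
    volume {x | f x < β} = 0 := by
  rw [hm] at h
  have h2 := ae_lt_of_lt_essInf h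
  rw [ae_iff] at h2
  refine measure_mono_null ?_ h2
  intro y hy
  simp only [Set.mem_setOf_eq, not_lt] at *
  exact_mod_cast hy.le

lemma aux_sublevel_pos {f : EuclideanSpace ℝ (Fin N) → ℝ} {m : EReal}
    (hm : m = essInf (fun x => (f x : EReal)) volume) {β : ℝ} (h : m < (β : EReal)) :
    0 < volume {x | f x < β} := by
  by_contra h0
  push_neg at h0
  have h0 : volume {x | f x < β} = 0 := le_antisymm h0 zero_le
  have hle : (β : EReal) ≤ essInf (fun x => (f x : EReal)) volume := by
    refine le_essInf_of_ae_le _ ?_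
    rw [EventuallyLE, ae_iff]
    refine measure_mono_null ?_ h0
    intro y hy
    simp only [Set.mem_setOf_eq, not_le] at *
    exact_mod_cast hy
  rw [← hm] at hle
  exact absurd (lt_of_lt_of_le h hle) (lt_irrefl _)

/-- Upper bound near a continuity point of `g`. -/
lemma aux_upper_s16 {f g : EuclideanSpace ℝ (Fin N) → ℝ}
    (hf : ∀ α : ℝ, Convex ℝ {x | f x < α}) (hfg : f =ᵐ[volume] g)
    {x : EuclideanSpace ℝ (Fin N)} (hgx : ContinuousAt g x) {ε : ℝ} (hε : 0 < ε) :
    ∃ r > 0, ∀ y ∈ ball x r, f y < g x + ε := by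
  obtain ⟨r, hr, hgr⟩ := Metric.continuousAt_iff.mp hgx ε hε
  refine ⟨r, hr, aux_ball_subset_convex (hf (g x + ε)) hr ?_⟩
  have hne : volume {y | f y ≠ g y} = 0 := by
    rw [EventuallyEq, ae_iff] at hfg; exact hfg
  refine measure_mono_null ?_ hne
  intro y ⟨hy1, hy2⟩
  simp only [Set.mem_setOf_eq, not_lt] at hy2
  have : g y < g x + ε := by
    have := hgr (mem_ball.mp hy1)
    rw [Real.dist_eq, abs_sub_lt_iff] at this
    linarith [this.1]
  intro hfgy
  rw [hfgy] at hy2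
  linarith

end Aux

section Main

variable {N : ℕ}

lemma aux_null_inter_of_gt {f g : EuclideanSpace ℝ (Fin N) → ℝ} (hfg : f =ᵐ[volume] g)
    {x : EuclideanSpace ℝ (Fin N)} {r β : ℝ}
    (h : ∀ y ∈ ball x r, β < g y) : volume ({y | f y < β} ∩ ball x r) = 0 := by
  have hne : volume {y | f y ≠ g y} = 0 := by rw [EventuallyEq, ae_iff] at hfg; exact hfg
  refine measure_mono_null ?_ hne
  rintro y ⟨hy1, hy2⟩
  rw [Set.mem_setOf_eq] at hy1 ⊢
  intro hfgy
  have := h y hy2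
  rw [hfgy] at hy1
  linarith

lemma aux_exc_discont {f : EuclideanSpace ℝ (Fin N) → ℝ} {m : EReal}
    (hm : m = essInf (fun x => (f x : EReal)) volume)
    {x : EuclideanSpace ℝ (Fin N)} {u : ℕ → EuclideanSpace ℝ (Fin N)} {α : ℝ}
    (hα : (α : EReal) < m) (hfu : ∀ n, f (u n) < α) (hu : Tendsto u atTop (nhds x)) :
    ¬ ContinuousAt f x := by
  intro hfx
  have hfxle : f x ≤ α :=
    le_of_tendsto (hfx.tendsto.comp hu) (Eventually.of_forall fun n => (hfu n).le)
  obtain ⟨β, hβ1, hβ2⟩ := EReal.exists_between_coe_real hα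
  have hαβ : α < β := by exact_mod_cast hβ1
  have hmem : f ⁻¹' Set.Iio β ∈ nhds x := hfx.tendsto (Iio_mem_nhds (by linarith))
  obtain ⟨r, hr, hball⟩ := Metric.mem_nhds_iff.mp hmem
  have hsub : ball x r ⊆ {y | f y < β} := hball
  have := measure_mono_null hsub (aux_sublevel_null hm hβ2)
  exact absurd this (measure_ball_pos volume x hr).ne'

lemma aux_key {f g : EuclideanSpace ℝ (Fin N) → ℝ}
    (hf : ∀ α : ℝ, Convex ℝ {x | f x < α}) (hfg : f =ᵐ[volume] g)
    {m : EReal} (hm : m = essInf (fun x => (f x : EReal)) volume)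
    {x : EuclideanSpace ℝ (Fin N)} (hgx : ContinuousAt g x) (hfx : ¬ ContinuousAt f x) :
    ∃ x, ContinuousAt g x ∧ m ≠ ⊥ ∧ (g x : EReal) = m ∧
      ∃ (u : ℕ → EuclideanSpace ℝ (Fin N)) (α : ℝ), (α : EReal) < m ∧
        (∀ n, f (u n) < α) ∧ Tendsto u atTop (nhds x) := by
  have hstep1 : ∃ ε > 0, ∀ r > 0, ∃ y, dist y x < r ∧ f y ≤ g x - ε := by
    by_contra hcon
    push_neg at hcon
    apply hfx
    have hfxgx : f x = g x := by
      have h1 : ∀ ε > 0, f x < g x + ε := by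
        intro ε hε
        obtain ⟨r, hr, hball⟩ := aux_upper_s16 hf hfg hgx hε
        exact hball x (mem_ball_self hr)
      have h2 : ∀ ε > 0, g x - ε < f x := by
        intro ε hε
        obtain ⟨r, hr, hball⟩ := hcon ε hε
        exact hball x (by simpa using hr)
      by_contra hne
      rcases lt_or_gt_of_ne hne with hlt | hgt
      · linarith [h2 ((g x - f x)/2) (by linarith)]
      · linarith [h1 ((f x - g x)/2) (by linarith)]
    rw [Metric.continuousAt_iff]
    intro ε hε
    obtain ⟨r1, hr1, hb1⟩ := aux_upper_s16 hf hfg hgx (half_pos hε)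
    obtain ⟨r2, hr2, hb2⟩ := hcon (ε/2) (half_pos hε)
    refine ⟨min r1 r2, lt_min hr1 hr2, fun y hy => ?_⟩
    have hy1 := hb1 y (mem_ball.mpr (lt_of_lt_of_le hy (min_le_left _ _)))
    have hy2 := hb2 y (lt_of_lt_of_le hy (min_le_right _ _))
    rw [Real.dist_eq, hfxgx, abs_sub_lt_iff]
    constructor <;> linarith
  obtain ⟨ε, hε, hseq⟩ := hstep1
  have hmle : m ≤ (g x : EReal) := by
    by_contra hlt
    push_neg at hlt
    obtain ⟨β, hβ1, hβ2⟩ := EReal.exists_between_coe_real hlt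
    have hgxβ : g x < β := by exact_mod_cast hβ1
    obtain ⟨r, hr, hgr⟩ := Metric.continuousAt_iff.mp hgx (β - g x) (by linarith)
    have hnull : volume (ball x r \ {y | f y < β}) = 0 := by
      have hne : volume {y | f y ≠ g y} = 0 := by rw [EventuallyEq, ae_iff] at hfg; exact hfg
      refine measure_mono_null ?_ hne
      rintro y ⟨hy1, hy2⟩
      simp only [Set.mem_setOf_eq, not_lt] at hy2
      have hgy := hgr (mem_ball.mp hy1)
      rw [Real.dist_eq, abs_sub_lt_iff] at hgy
      intro hfgy
      rw [hfgy] at hy2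
      linarith [hgy.1]
    have hpos := aux_pos_inter_of_null_diff hr hnull
    have hzero : volume (ball x r ∩ {y | f y < β}) = 0 :=
      measure_mono_null Set.inter_subset_right (aux_sublevel_null hm hβ2)
    exact absurd hzero hpos.ne'
  have hmge : (g x : EReal) ≤ m := by
    by_contra hlt
    push_neg at hlt
    have hmax : max m (((g x - ε : ℝ)) : EReal) < ((g x : ℝ) : EReal) := by
      rw [max_lt_iff]
      exact ⟨hlt, by exact_mod_cast (by linarith : g x - ε < g x)⟩
    obtain ⟨β, hβ1, hβ2⟩ := EReal.exists_between_coe_real hmax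
    have hβm : m < (β : EReal) := lt_of_le_of_lt (le_max_left _ _) hβ1
    have hβε : g x - ε < β := by exact_mod_cast lt_of_le_of_lt (le_max_right _ _) hβ1
    have hβgx : β < g x := by exact_mod_cast hβ2
    have hCpos := aux_sublevel_pos hm hβm
    obtain ⟨z, hz⟩ := aux_interior_nonempty_of_pos (hf β) hCpos
    obtain ⟨r0, hr0, hgr⟩ := Metric.continuousAt_iff.mp hgx (g x - β) (by linarith)
    have hgball : ∀ y ∈ ball x r0, β < g y := by
      intro y hy
      have := hgr (mem_ball.mp hy)
      rw [Real.dist_eq, abs_sub_lt_iff] at this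
      linarith [this.2]
    have hnull := aux_null_inter_of_gt hfg hgball
    obtain ⟨y, hyx, hyf⟩ := hseq r0 hr0
    have hyC : y ∈ {y | f y < β} := by rw [Set.mem_setOf_eq]; linarith
    set s : ℝ := min 1 ((r0 - dist y x) / (‖z - y‖ + 1)) with hs
    have hzy1 : (0:ℝ) < ‖z - y‖ + 1 := by positivity
    have hs0 : 0 < s := lt_min one_pos (div_pos (by linarith) hzy1)
    have hs1 : s ≤ 1 := min_le_left _ _
    have hw := (hf β).add_smul_sub_mem_interior hyC hz ⟨hs0, hs1⟩
    have hwball : y + s • (z - y) ∈ ball x r0 := by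
      have hd : dist (y + s • (z - y)) y = s * ‖z - y‖ := by
        rw [dist_eq_norm]
        simp [norm_smul, abs_of_pos hs0]
      have hle : s * ‖z - y‖ ≤ ((r0 - dist y x)/(‖z - y‖ + 1)) * ‖z - y‖ :=
        mul_le_mul_of_nonneg_right (min_le_right _ _) (norm_nonneg _)
      have h3 : ((r0 - dist y x)/(‖z - y‖ + 1)) * ‖z - y‖ < r0 - dist y x := by
        rw [div_mul_eq_mul_div, div_lt_iff₀ hzy1]
        nlinarith [norm_nonneg (z - y)]
      rw [mem_ball]
      calc dist (y + s • (z - y)) x ≤ dist (y + s • (z - y)) y + dist y x := dist_triangle _ _ _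
        _ < (r0 - dist y x) + dist y x := by rw [hd]; linarith
        _ = r0 := by ring
    have hU : 0 < volume (interior {y | f y < β} ∩ ball x r0) :=
      (isOpen_interior.inter isOpen_ball).measure_pos volume ⟨_, hw, hwball⟩
    have hUz : volume (interior {y | f y < β} ∩ ball x r0) = 0 :=
      measure_mono_null (Set.inter_subset_inter_left _ interior_subset) hnull
    exact absurd hUz hU.ne'
  have hgm : (g x : EReal) = m := le_antisymm hmge hmle
  have hbot : m ≠ ⊥ := by rw [← hgm]; exact EReal.coe_ne_bot _
  choose u hu1 hu2 using fun n : ℕ => hseq (1/(n+1)) (by positivity)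
  refine ⟨x, hgx, hbot, hgm, u, g x - ε/2, ?_, fun n => by linarith [hu2 n], ?_⟩
  · rw [← hgm]
    exact_mod_cast (by linarith : g x - ε/2 < g x)
  · exact tendsto_iff_dist_tendsto_zero.mpr
      (squeeze_zero (fun n => dist_nonneg) (fun n => (hu1 n).le)
        tendsto_one_div_add_atTop_nhds_zero_nat)

end Main

theorem stmt_16 {N : ℕ} (f g : EuclideanSpace ℝ (Fin N) → ℝ)
    (hf : ∀ α : ℝ, Convex ℝ {x | f x < α}) (hg : ∀ α : ℝ, Convex ℝ {x | g x < α})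
    (hfg : f =ᵐ[volume] g) (m : EReal)
    (hm : m = essInf (fun x => (f x : EReal)) volume) (hmtop : m ≠ ⊤) :
    ((∀ x, ContinuousAt g x → ContinuousAt f x) ↔
      ¬ ∃ x, ContinuousAt g x ∧ m ≠ ⊥ ∧ (g x : EReal) = m ∧
        ∃ (u : ℕ → EuclideanSpace ℝ (Fin N)) (α : ℝ), (α : EReal) < m ∧
          (∀ n, f (u n) < α) ∧ Tendsto u atTop (nhds x)) ∧
    ((∀ x, ContinuousAt g x → ContinuousAt f x) →
      ∀ x, ContinuousAt g x → f x = g x) := by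
  constructor
  · constructor
    · rintro h ⟨x, hgx, hbot, hgm, u, α, hα, hfu, hu⟩
      exact aux_exc_discont hm hα hfu hu (h x hgx)
    · intro h x hgx
      by_contra hfx
      exact h (aux_key hf hfg hm hgx hfx)
  · intro h x hgx
    have hfx := h x hgx
    have hne : volume {y | f y ≠ g y} = 0 := by rw [EventuallyEq, ae_iff] at hfg; exact hfg
    have hsel : ∀ n : ℕ, ∃ z, dist z x < 1/(n+1) ∧ f z = g z := by
      intro n
      by_contra hcon
      push_neg at hcon
      have hsub : ball x (1/(n+1)) ⊆ {y | f y ≠ g y} := fun y hy => hcon y (mem_ball.mp hy)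
      exact absurd (measure_mono_null hsub hne)
        (measure_ball_pos volume x (by positivity)).ne'
    choose z hz1 hz2 using hsel
    have hzt : Tendsto z atTop (nhds x) := tendsto_iff_dist_tendsto_zero.mpr
      (squeeze_zero (fun n => dist_nonneg) (fun n => (hz1 n).le)
        tendsto_one_div_add_atTop_nhds_zero_nat)
    exact tendsto_nhds_unique (hfx.tendsto.comp hzt)
      (Tendsto.congr (fun n => (hz2 n).symm) (hgx.tendsto.comp hzt))
end

section
/- Define f : ℝ² → ℝ by f(x₁, x₂) = |x₁| if x₂ ≥ 0 or if (x₂ < 0 and x₁ ≠ 0), and f(0, x₂) = x₂ if x₂ < 0. Then f is quasiconvex, the essential infimum of f over ℝ² with respect to Lebesgue measure equals 0, the union over real α < 0 of the closures of the sublevel sets F_α := {y ∈ ℝ² : f(y) < α} equals {0} × (−∞, 0), the closure of F_0 := {y ∈ ℝ² : f(y) < 0} equals {0} × (−∞, 0], and f is continuous at (0,0). -/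
open MeasureTheory Metric Filter

theorem stmt_18 (f : ℝ × ℝ → ℝ)
    (hf : ∀ p : ℝ × ℝ, f p = if p.2 < 0 ∧ p.1 = 0 then p.2 else |p.1|) :
    (∀ α : ℝ, Convex ℝ {y : ℝ × ℝ | f y < α}) ∧
    essInf (fun y => (f y : EReal)) volume = (0 : EReal) ∧
    (⋃ α ∈ Set.Iio (0 : ℝ), closure {y : ℝ × ℝ | f y < α}) =
      ({0} : Set ℝ) ×ˢ Set.Iio (0 : ℝ) ∧
    closure {y : ℝ × ℝ | f y < 0} = ({0} : Set ℝ) ×ˢ Set.Iic (0 : ℝ) ∧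
    ContinuousAt f (0, 0) := by
  -- sublevel set descriptions
  have hneg : ∀ α : ℝ, α ≤ 0 → {y : ℝ × ℝ | f y < α} = ({0} : Set ℝ) ×ˢ Set.Iio α := by
    intro α hα
    ext p
    simp only [Set.mem_setOf_eq, Set.mem_prod, Set.mem_singleton_iff, Set.mem_Iio, hf p]
    split_ifs with h
    · constructor
      · intro h2; exact ⟨h.2, h2⟩
      · intro h2; exact h2.2
    · constructor
      · intro h2; exact absurd (lt_of_lt_of_le h2 hα) (not_lt.2 (abs_nonneg _))
      · intro h2
        exact absurd ⟨lt_of_lt_of_le h2.2 hα, h2.1⟩ h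
  have hpos : ∀ α : ℝ, 0 < α → {y : ℝ × ℝ | f y < α} = Set.Ioo (-α) α ×ˢ (Set.univ : Set ℝ) := by
    intro α hα
    ext p
    simp only [Set.mem_setOf_eq, Set.mem_prod, Set.mem_Ioo, Set.mem_univ, and_true, hf p]
    split_ifs with h
    · constructor
      · intro _; rw [h.2]; constructor <;> simpa using hα
      · intro _; exact h.1.trans hα
    · exact abs_lt
  refine ⟨?_, ?_, ?_, ?_, ?_⟩
  · intro α
    rcases le_or_gt α 0 with hα | hα
    · rw [hneg α hα]; exact (convex_singleton 0).prod (convex_Iio α)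
    · rw [hpos α hα]; exact (convex_Ioo (-α) α).prod convex_univ
  · rw [essInf_eq_sSup]
    apply le_antisymm
    · apply sSup_le
      intro a ha
      by_contra hc
      push_neg at hc
      obtain ⟨r, hr0, hra⟩ := EReal.exists_between_coe_real hc
      have hr0' : (0:ℝ) < r := by exact_mod_cast hr0
      have hsub : Set.Ioo (-r) r ×ˢ Set.Ioo (0:ℝ) 1 ⊆ {x : ℝ × ℝ | (f x : EReal) < a} := by
        rintro ⟨x1, x2⟩ ⟨hx1, hx2⟩
        have : f (x1, x2) = |x1| := by
          rw [hf]; simp only [ite_eq_right_iff]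
          intro h; exact absurd h.1 (not_lt.2 hx2.1.le)
        simp only [Set.mem_setOf_eq, this]
        refine lt_trans ?_ hra
        exact_mod_cast abs_lt.2 hx1
      have := measure_mono_null hsub ha
      rw [Measure.volume_eq_prod, Measure.prod_prod, Real.volume_Ioo, Real.volume_Ioo] at this
      simp only [mul_eq_zero, ENNReal.ofReal_eq_zero] at this
      rcases this with h | h <;> linarith
    · apply le_sSup
      have hsub : {x : ℝ × ℝ | (f x : EReal) < 0} ⊆ ({0} : Set ℝ) ×ˢ (Set.univ : Set ℝ) := by
        rintro ⟨x1, x2⟩ hx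
        simp only [Set.mem_setOf_eq] at hx
        have hx' : f (x1, x2) < 0 := by exact_mod_cast hx
        rw [hf] at hx'
        simp only [Set.mem_prod, Set.mem_singleton_iff, Set.mem_univ, and_true]
        by_contra h0
        simp only [h0, and_false, if_false] at hx'
        exact absurd hx' (not_lt.2 (abs_nonneg _))
      have : volume (({0} : Set ℝ) ×ˢ (Set.univ : Set ℝ)) = 0 := by
        rw [Measure.volume_eq_prod, Measure.prod_prod]; simp
      exact measure_mono_null hsub this
  · ext p
    simp only [Set.mem_iUnion, Set.mem_Iio]
    constructor
    · rintro ⟨α, hα, hp⟩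
      rw [hneg α hα.le, closure_prod_eq, closure_singleton, closure_Iio] at hp
      obtain ⟨h1, h2⟩ := hp
      exact ⟨h1, lt_of_le_of_lt h2 hα⟩
    · rintro ⟨h1, h2⟩
      refine ⟨p.2 / 2, by linarith [Set.mem_Iio.1 h2], ?_⟩
      have h2' : p.2 < 0 := h2
      rw [hneg _ (by linarith), closure_prod_eq, closure_singleton, closure_Iio]
      exact ⟨h1, by simp only [Set.mem_Iic]; linarith⟩
  · rw [hneg 0 le_rfl, closure_prod_eq, closure_singleton, closure_Iio]
  · have hf0 : f (0, 0) = 0 := by rw [hf]; simp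
    unfold ContinuousAt
    rw [hf0]
    have hb : ∀ p : ℝ × ℝ, ‖f p‖ ≤ ‖p‖ := by
      intro p
      rw [hf]
      split_ifs with h
      · exact norm_snd_le p
      · have he : ‖|p.1|‖ = ‖p.1‖ := by rw [Real.norm_eq_abs, abs_abs, Real.norm_eq_abs]
        rw [he]; exact norm_fst_le p
    exact squeeze_zero_norm hb (by simpa using continuous_norm.tendsto ((0,0) : ℝ × ℝ))
end
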